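/- Let (g, t) and (g′, t′) be constructions with decompositions D and D′ respectively. If D = D′ then (g, t) = (g′, t′); that is, a decomposition is a decomposition of a unique construction. -/

import Mathlib

namespace RST

/-! ## Type systems -/

/-- A relation (given as a set of pairs) is a partial order on the set `Ty`. -/
def IsPartialOrderOn {U : Type*} (Ty : Set U) (le : Set (U × U)) : Prop :=
  (∀ p ∈ le, p.1 ∈ Ty ∧ p.2 ∈ Ty) ∧
  (∀ τ ∈ Ty, (τ, τ) ∈ le) ∧
  (∀ a b : U, (a, b) ∈ le → (b, a) ∈ le → a = b) ∧
  (∀ a b c : U, (a, b) ∈ le → (b, c) ∈ le → (a, c) ∈ le)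

/-- The subtype closure of `Ty'` in the type system `(Ty, le)`. -/
def subtypeClosure {U : Type*} (Ty : Set U) (le : Set (U × U)) (Ty' : Set U) : Set U :=
  {τ | τ ∈ Ty ∧ ∃ τ' ∈ Ty', (τ, τ') ∈ le}

/-- The set of all subtype closures of subsets of `Ty`. -/
def SC {U : Type*} (Ty : Set U) (le : Set (U × U)) : Set (Set U) :=
  {S | ∃ Ty' ⊆ Ty, S = subtypeClosure Ty le Ty'}

/-- The candidate order of an upper bound extension: the reflexive closure (on `Ty ∪ Tystar`)
of `le` together with the pairs `(τ, f S)` for `τ ∈ S ∈ SC Ty le`. -/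
def upperBoundRel {U : Type*} (Ty Tystar : Set U) (le : Set (U × U)) (f : Set U → U) :
    Set (U × U) :=
  (le ∪ {p : U × U | ∃ S ∈ SC Ty le, p.1 ∈ S ∧ p.2 = f S}) ∪
    {p : U × U | p.1 = p.2 ∧ p.1 ∈ Ty ∪ Tystar}

/-! ## Graphs -/

/-- A (raw) directed labelled bipartite graph: tokens `Tk`, configurators `Cf`, arrows `Arr`,
incidence, arrow indices and vertex labels all given relationally (as sets of pairs), so that
unions of graphs are componentwise unions. -/
structure PreGraph (V A L : Type*) where
  Tk : Set V
  Cf : Set V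
  Arr : Set A
  inc : Set (A × (V × V))
  ia : Set (A × ℕ)
  tl : Set (V × L)
  cl : Set (V × L)

variable {V A L : Type*}

instance : Union (PreGraph V A L) :=
  ⟨fun g h =>
    ⟨g.Tk ∪ h.Tk, g.Cf ∪ h.Cf, g.Arr ∪ h.Arr, g.inc ∪ h.inc, g.ia ∪ h.ia,
      g.tl ∪ h.tl, g.cl ∪ h.cl⟩⟩

def PreGraph.Subgraph (h g : PreGraph V A L) : Prop :=
  h.Tk ⊆ g.Tk ∧ h.Cf ⊆ g.Cf ∧ h.Arr ⊆ g.Arr ∧ h.inc ⊆ g.inc ∧ h.ia ⊆ g.ia ∧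
    h.tl ⊆ g.tl ∧ h.cl ⊆ g.cl

/-- The vertices adjacent to `u` (together with `u`). -/
def PreGraph.adjTo (g : PreGraph V A L) (u : V) : Set V :=
  {u} ∪ {v | ∃ a ∈ g.Arr, (a, (v, u)) ∈ g.inc ∨ (a, (u, v)) ∈ g.inc}

/-- The arrows incident to `u`. -/
def PreGraph.incidentArrows (g : PreGraph V A L) (u : V) : Set A :=
  {a | a ∈ g.Arr ∧ ∃ v, (a, (v, u)) ∈ g.inc ∨ (a, (u, v)) ∈ g.inc}

/-- The restriction of a graph to given vertex and arrow sets. -/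
def PreGraph.restrict (g : PreGraph V A L) (Vs : Set V) (As : Set A) : PreGraph V A L :=
  ⟨g.Tk ∩ Vs, g.Cf ∩ Vs, g.Arr ∩ As, {q | q ∈ g.inc ∧ q.1 ∈ As},
    {q | q ∈ g.ia ∧ q.1 ∈ As}, {q | q ∈ g.tl ∧ q.1 ∈ Vs}, {q | q ∈ g.cl ∧ q.1 ∈ Vs}⟩

/-- The neighbourhood of a vertex `u`. -/
def PreGraph.Nh (g : PreGraph V A L) (u : V) : PreGraph V A L :=
  g.restrict (g.adjTo u) (g.incidentArrows u)

/-- A set of pairs is (the graph of) a function with domain `D`. -/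
def IsFunctionOn {α β : Type*} (R : Set (α × β)) (D : Set α) : Prop :=
  (∀ p ∈ R, p.1 ∈ D) ∧ ∀ x ∈ D, ∃! y, (x, y) ∈ R

/-- A raw graph is a genuine directed labelled bipartite graph. -/
def IsGraph (g : PreGraph V A L) : Prop :=
  Disjoint g.Tk g.Cf ∧
  IsFunctionOn g.inc g.Arr ∧
  (∀ a v w, (a, (v, w)) ∈ g.inc → (v ∈ g.Tk ∧ w ∈ g.Cf) ∨ (v ∈ g.Cf ∧ w ∈ g.Tk)) ∧
  IsFunctionOn g.ia g.Arr ∧ IsFunctionOn g.tl g.Tk ∧ IsFunctionOn g.cl g.Cf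

/-- `ars` is the list of incoming arrows of `u`, listed in increasing index order
(the arrow at position `i` carries index `i+1`). -/
def InArrowSeq (g : PreGraph V A L) (u : V) (ars : List A) : Prop :=
  ars.Nodup ∧ (∀ a : A, a ∈ ars ↔ a ∈ g.Arr ∧ ∃ w, (a, (w, u)) ∈ g.inc) ∧
  ∀ (i : ℕ) (a : A), ars[i]? = some a → (a, i + 1) ∈ g.ia

/-- `t` is an output token of the configurator `u`. -/
def OutputTok (g : PreGraph V A L) (u t : V) : Prop :=
  ∃ a ∈ g.Arr, (a, (u, t)) ∈ g.inc

/-- `ts` is the input token-sequence of the configurator `u`. -/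
def InputTokSeq (g : PreGraph V A L) (u : V) (ts : List V) : Prop :=
  ∃ ars : List A, InArrowSeq g u ars ∧
    List.Forall₂ (fun a v => (a, (v, u)) ∈ g.inc) ars ts

/-- `τs` is the input type-sequence of the configurator `u`. -/
def InputTypeSeq (g : PreGraph V A L) (u : V) (τs : List L) : Prop :=
  ∃ ts : List V, InputTokSeq g u ts ∧ List.Forall₂ (fun v τ => (v, τ) ∈ g.tl) ts τs

/-- `g` is a configuration of the constructor `c` (with signature `(ins, out)`),
whose single configurator is `u`. -/
def IsConfiguration (le : Set (L × L)) (g : PreGraph V A L) (u : V) (c : L)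
    (ins : List L) (out : L) : Prop :=
  IsGraph g ∧ g.Cf = {u} ∧ (u, c) ∈ g.cl ∧
  g.Tk = {v | ∃ a ∈ g.Arr, (a, (v, u)) ∈ g.inc ∨ (a, (u, v)) ∈ g.inc} ∧
  (∃! a0 : A, a0 ∈ g.Arr ∧ ∃ w, (a0, (u, w)) ∈ g.inc) ∧
  (∀ a0 ∈ g.Arr, ∀ w : V, (a0, (u, w)) ∈ g.inc →
      (a0, 0) ∈ g.ia ∧ ∃ σ, (w, σ) ∈ g.tl ∧ (σ, out) ∈ le) ∧
  (∃ ars : List A, InArrowSeq g u ars ∧ ars.length = ins.length ∧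
    ∀ (i : ℕ) (a : A) (τ : L), ars[i]? = some a → ins[i]? = some τ →
      ∃ w σ, (a, (w, u)) ∈ g.inc ∧ (w, σ) ∈ g.tl ∧ (σ, τ) ∈ le)

/-- A structure graph for the constructor specification `(C, sig)` over types `(Ty, le)`. -/
def IsStructureGraph (Ty : Set L) (le : Set (L × L)) (C : Set L)
    (sig : Set (L × (List L × L))) (g : PreGraph V A L) : Prop :=
  IsGraph g ∧ (∀ x τ, (x, τ) ∈ g.tl → τ ∈ Ty) ∧
  ∀ u ∈ g.Cf, ∃ c ins out, (u, c) ∈ g.cl ∧ c ∈ C ∧ (c, (ins, out)) ∈ sig ∧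
    IsConfiguration le (g.Nh u) u c ins out

/-! ## Construction spaces -/

/-- The raw data of a construction space: a type system, a constructor specification and
a structure graph. -/
structure CSpace (V A L : Type*) where
  Ty : Set L
  le : Set (L × L)
  C : Set L
  sig : Set (L × (List L × L))
  G : PreGraph V A L

instance : Union (CSpace V A L) :=
  ⟨fun c d => ⟨c.Ty ∪ d.Ty, c.le ∪ d.le, c.C ∪ d.C, c.sig ∪ d.sig, c.G ∪ d.G⟩⟩

/-- The raw data forms a genuine construction space. -/
def IsCSpace (Cs : CSpace V A L) : Prop :=
  IsPartialOrderOn Cs.Ty Cs.le ∧ Disjoint Cs.C Cs.Ty ∧ IsFunctionOn Cs.sig Cs.C ∧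
  (∀ c ins out, (c, (ins, out)) ∈ Cs.sig →
      ins ≠ [] ∧ (∀ τ ∈ ins, τ ∈ Cs.Ty) ∧ out ∈ Cs.Ty) ∧
  IsStructureGraph Cs.Ty Cs.le Cs.C Cs.sig Cs.G

/-- Token-functionality of the constructors of a structure graph. -/
def TokenFunctional (g : PreGraph V A L) : Prop :=
  ∀ u u' c, u ∈ g.Cf → u' ∈ g.Cf → (u, c) ∈ g.cl → (u', c) ∈ g.cl →
    ∀ ts, InputTokSeq g u ts → InputTokSeq g u' ts →
      ∀ t t', OutputTok g u t → OutputTok g u' t' → t = t'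

/-- Type-functionality of the constructors of a structure graph. -/
def TypeFunctional (g : PreGraph V A L) : Prop :=
  ∀ u u' c, u ∈ g.Cf → u' ∈ g.Cf → (u, c) ∈ g.cl → (u', c) ∈ g.cl →
    ∀ τs, InputTypeSeq g u τs → InputTypeSeq g u' τs →
      ∀ t t' τ τ', OutputTok g u t → OutputTok g u' t' →
        (t, τ) ∈ g.tl → (t', τ') ∈ g.tl → τ = τ'

def IsFunctionalGraph (g : PreGraph V A L) : Prop :=
  TokenFunctional g ∧ TypeFunctional g

/-! ## Representational systems -/

/-- The raw data of a representational system: grammatical, entailment and identification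
spaces. -/
structure RSystem (V A L : Type*) where
  Gs : CSpace V A L
  Es : CSpace V A L
  Is : CSpace V A L

instance : Union (RSystem V A L) :=
  ⟨fun r s => ⟨r.Gs ∪ s.Gs, r.Es ∪ s.Es, r.Is ∪ s.Is⟩⟩

/-- The universal space of a representational system. -/
def RSystem.uspace (R : RSystem V A L) : CSpace V A L := (R.Gs ∪ R.Es) ∪ R.Is

/-- `R` is a representational system formed over the type system `(Ty, le)` and the
meta-type system `(MTy, Mle)`. -/
def IsRSystem (R : RSystem V A L) (Ty : Set L) (le : Set (L × L))
    (MTy : Set L) (Mle : Set (L × L)) : Prop :=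
  IsPartialOrderOn Ty le ∧ IsPartialOrderOn MTy Mle ∧
  IsPartialOrderOn (Ty ∪ MTy) (le ∪ Mle) ∧
  R.Gs.Ty = Ty ∧ R.Gs.le = le ∧ IsCSpace R.Gs ∧ IsFunctionalGraph R.Gs.G ∧
  R.Es.Ty = Ty ∧ R.Es.le = le ∧ IsCSpace R.Es ∧ R.Es.G.Tk ⊆ R.Gs.G.Tk ∧
  R.Is.Ty = Ty ∪ MTy ∧ R.Is.le = le ∪ Mle ∧ IsCSpace R.Is ∧
  (∀ x ∈ R.Is.G.Tk, x ∉ R.Gs.G.Tk → ∃ τ ∈ MTy, (x, τ) ∈ R.Is.G.tl) ∧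
  (∀ x ∈ R.Is.G.Tk, (∃ u ∈ R.Is.G.Cf, OutputTok R.Is.G u x) → x ∉ R.Gs.G.Tk) ∧
  IsCSpace (R.Gs ∪ R.Es) ∧ IsCSpace (R.Gs ∪ R.Is) ∧ IsCSpace (R.Es ∪ R.Is) ∧
  Disjoint R.Gs.C R.Es.C ∧ Disjoint R.Gs.C R.Is.C ∧ Disjoint R.Es.C R.Is.C

/-- `(R, R', Is'')` is an inter-representational-system encoding, where `R` is formed over
`(Ty, le)` and `(MTy, Mle)`, `R'` over `(Ty', le')` and `(MTy', Mle')`, and `Is''` is an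
identification space formed over `(Ty ∪ Ty', le ∪ le')` and `(MTy'', Mle'')`. -/
def IsIRSE (R R' : RSystem V A L) (Is'' : CSpace V A L)
    (Ty : Set L) (le : Set (L × L)) (MTy : Set L) (Mle : Set (L × L))
    (Ty' : Set L) (le' : Set (L × L)) (MTy' : Set L) (Mle' : Set (L × L))
    (MTy'' : Set L) (Mle'' : Set (L × L)) : Prop :=
  IsRSystem R Ty le MTy Mle ∧ IsRSystem R' Ty' le' MTy' Mle' ∧
  IsRSystem (R ∪ R') (Ty ∪ Ty') (le ∪ le') (MTy ∪ MTy') (Mle ∪ Mle') ∧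
  IsPartialOrderOn MTy'' Mle'' ∧
  IsPartialOrderOn ((Ty ∪ Ty') ∪ MTy'') ((le ∪ le') ∪ Mle'') ∧
  Is''.Ty = (Ty ∪ Ty') ∪ MTy'' ∧ Is''.le = (le ∪ le') ∪ Mle'' ∧ IsCSpace Is'' ∧
  MTy ∪ MTy' ⊆ MTy'' ∧ Mle ∪ Mle' ⊆ Mle'' ∧
  (∀ x ∈ Is''.G.Tk, x ∉ (R.Gs ∪ R'.Gs).G.Tk → ∃ τ ∈ MTy'', (x, τ) ∈ Is''.G.tl) ∧
  (∀ x ∈ Is''.G.Tk, (∃ u ∈ Is''.G.Cf, OutputTok Is''.G u x) →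
      x ∉ (R.Gs ∪ R'.Gs).G.Tk) ∧
  IsCSpace ((R.Gs ∪ R'.Gs) ∪ Is'') ∧ IsCSpace ((R.Es ∪ R'.Es) ∪ Is'') ∧
  IsCSpace ((R.Is ∪ R'.Is) ∪ Is'') ∧
  Disjoint Is''.C (R.Gs ∪ R'.Gs).C ∧ Disjoint Is''.C (R.Es ∪ R'.Es).C ∧
  Disjoint Is''.C (R.Is ∪ R'.Is).C

/-! ## Trails -/

/-- A trail candidate: a list of arrows together with an associated source and target vertex
(needed for the empty trail `[]_v`). -/
structure Trail (V A : Type*) where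
  arrows : List A
  src : V
  tgt : V

/-- The empty trail `[]_v`. -/
def Trail.nil {V A : Type*} (v : V) : Trail V A := ⟨[], v, v⟩

/-- Concatenation `e ⊕ w` of trails. -/
def Trail.append {V A : Type*} (e w : Trail V A) : Trail V A :=
  ⟨e.arrows ++ w.arrows, e.src, w.tgt⟩

/-- The image of a trail under vertex/arrow maps. -/
def Trail.map {V A : Type*} (fv : V → V) (fa : A → A) (tr : Trail V A) : Trail V A :=
  ⟨tr.arrows.map fa, fv tr.src, fv tr.tgt⟩

/-- The arrows chain through the graph from `s` to `t`. -/
def ChainIn (g : PreGraph V A L) : List A → V → V → Prop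
  | [], s, t => s = t
  | a :: rest, s, t => a ∈ g.Arr ∧ ∃ m, (a, (s, m)) ∈ g.inc ∧ ChainIn g rest m t

/-- `tr` is a trail in `g`. -/
def IsTrailIn (g : PreGraph V A L) (tr : Trail V A) : Prop :=
  tr.arrows.Nodup ∧ ChainIn g tr.arrows tr.src tr.tgt ∧
  tr.src ∈ g.Tk ∪ g.Cf ∧ tr.tgt ∈ g.Tk ∪ g.Cf

/-- A trail is well-formed provided its source and target are tokens. -/
def WellFormed (g : PreGraph V A L) (tr : Trail V A) : Prop :=
  tr.src ∈ g.Tk ∧ tr.tgt ∈ g.Tk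

/-- `tr` is (source-)extendable by the arrow `a`. -/
def ExtendableBy (g : PreGraph V A L) (tr : Trail V A) (a : A) : Prop :=
  a ∈ g.Arr ∧ a ∉ tr.arrows ∧ ∃ s, (a, (s, tr.src)) ∈ g.inc

def Extendable (g : PreGraph V A L) (tr : Trail V A) : Prop :=
  ∃ a, ExtendableBy g tr a

def NonExtendable (g : PreGraph V A L) (tr : Trail V A) : Prop :=
  ¬ Extendable g tr

/-- `TES g tr S` holds iff `S` is the trail extension sequence of the trail `tr` in `g`,
following the recursive definition of TES. -/
inductive TES (g : PreGraph V A L) : Trail V A → List (Trail V A) → Prop where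
  | nonext (tr : Trail V A) (h : NonExtendable g tr) :
      TES g tr [⟨[], tr.src, tr.src⟩]
  | ext (tr : Trail V A) (a : A) (u : V) (ars : List A)
      (Ss : List (List (Trail V A)))
      (hext : ExtendableBy g tr a)
      (hinc : (a, (u, tr.src)) ∈ g.inc)
      (hars : InArrowSeq g u ars)
      (hlen : Ss.length = ars.length)
      (hrec : ∀ (i : ℕ) (ai : A) (si : V) (Si : List (Trail V A)),
          ars[i]? = some ai → Ss[i]? = some Si → (ai, (si, u)) ∈ g.inc →
          TES g ⟨ai :: a :: tr.arrows, si, tr.tgt⟩ Si) :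
      TES g tr (List.flatten (List.zipWith
        (fun (ai : A) (Si : List (Trail V A)) =>
          Si.map (fun e => (⟨e.arrows ++ [ai, a], e.src, tr.src⟩ : Trail V A)))
        ars Ss))

/-- The sequence of sources of a sequence of trails. -/
def srcSeq {V A : Type*} (S : List (Trail V A)) : List V := S.map Trail.src

/-- The right product `S ◁ w`, appending the trail `w` to each trail in `S`. -/
def rprod {V A : Type*} (S : List (Trail V A)) (w : Trail V A) : List (Trail V A) :=
  S.map fun e => e.append w

/-! ## Constructions -/

/-- Every token is the target of at most one arrow. -/
def UniStructured (g : PreGraph V A L) : Prop :=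
  ∀ x ∈ g.Tk, ∀ a ∈ g.Arr, ∀ b ∈ g.Arr,
    (∃ w, (a, (w, x)) ∈ g.inc) → (∃ w, (b, (w, x)) ∈ g.inc) → a = b

/-- `(g, t)` is a construction in the construction space `Cs`: `g` is a finite uni-structured
structure graph (a subgraph of the structure graph of `Cs`), `t` is a token of `g`, and every
vertex of `g` is the source of a trail targeting `t`. -/
def IsConstruction (Cs : CSpace V A L) (g : PreGraph V A L) (t : V) : Prop :=
  g.Subgraph Cs.G ∧ IsStructureGraph Cs.Ty Cs.le Cs.C Cs.sig g ∧
  g.Tk.Finite ∧ g.Cf.Finite ∧ g.Arr.Finite ∧ UniStructured g ∧ t ∈ g.Tk ∧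
  ∀ v ∈ g.Tk ∪ g.Cf, ∃ tr : Trail V A, IsTrailIn g tr ∧ tr.src = v ∧ tr.tgt = t

/-- `(g, t)` is a construction *in* `Cs` in the strong sense: moreover every configurator of `g`
has its full neighbourhood from the structure graph of `Cs`. -/
def IsConstructionIn (Cs : CSpace V A L) (g : PreGraph V A L) (t : V) : Prop :=
  IsConstruction Cs g t ∧ ∀ u ∈ g.Cf, g.Nh u = Cs.G.Nh u

/-- A trivial construction: the construct is its only vertex. -/
def TrivialC (g : PreGraph V A L) (t : V) : Prop := g.Tk ∪ g.Cf = {t}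

/-- A basic construction: exactly one configurator. -/
def BasicC (g : PreGraph V A L) : Prop := ∃ u, g.Cf = {u}

/-- The set of arrows occurring in a sequence of trails. -/
def trailArrowSet {V A : Type*} (TR : List (Trail V A)) : Set A :=
  {a | ∃ tr ∈ TR, a ∈ tr.arrows}

/-- The vertices of the `TR`-graph: vertices incident to arrows of trails of `TR`,
together with the associated vertex of any empty trail of `TR`. -/
def trailVertexSet (g : PreGraph V A L) (TR : List (Trail V A)) : Set V :=
  {v | (∃ a ∈ trailArrowSet TR, ∃ w, (a, (v, w)) ∈ g.inc ∨ (a, (w, v)) ∈ g.inc) ∨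
    ∃ tr ∈ TR, tr.arrows = [] ∧ tr.src = v}

/-- The `TR`-graph `v(TR)`. -/
def trGraph (g : PreGraph V A L) (TR : List (Trail V A)) : PreGraph V A L :=
  g.restrict (trailVertexSet g TR) (trailArrowSet TR)

/-- `((g', t), ics)` is a split of the construction `(g, t)`: `(g', t)` is a generator and
`ics` is the corresponding induced construction sequence (each induced construction is
`(v(TES(tri)), source(tri))`, the TES being computed in `(g, t)`). -/
def IsSplit (Cs : CSpace V A L) (g : PreGraph V A L) (t : V)
    (g' : PreGraph V A L) (ics : List (PreGraph V A L × V)) : Prop :=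
  IsConstruction Cs g' t ∧ g'.Subgraph g ∧
  ∃ trs : List (Trail V A), TES g' (Trail.nil t) trs ∧ ics.length = trs.length ∧
    ∀ (i : ℕ) (tri : Trail V A), trs[i]? = some tri →
      ∃ Si : List (Trail V A), TES g tri Si ∧ ics[i]? = some (trGraph g Si, tri.src)

/-! ## Decompositions -/

/-- A decomposition tree: vertices labelled by a graph and a token, with the incoming arrows
of every vertex given in index order by a list of subtrees. -/
inductive DTree (V A L : Type*) where
  | node : PreGraph V A L → V → List (DTree V A L) → DTree V A L

def DTree.rootGraph : DTree V A L → PreGraph V A L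
  | .node g _ _ => g

def DTree.rootTok : DTree V A L → V
  | .node _ t _ => t

def DTree.kids : DTree V A L → List (DTree V A L)
  | .node _ _ cs => cs

/-- `IsDecompositionOf Cs D g t` holds iff `D` is a decomposition of the construction
`(g, t)` in `Cs`. -/
inductive IsDecompositionOf (Cs : CSpace V A L) : DTree V A L → PreGraph V A L → V → Prop where
  | single (g : PreGraph V A L) (t : V) (h : IsConstruction Cs g t) :
      IsDecompositionOf Cs (.node g t []) g t
  | split (g : PreGraph V A L) (t : V) (g' : PreGraph V A L)
      (ics : List (PreGraph V A L × V)) (cs : List (DTree V A L))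
      (hc : IsConstruction Cs g t)
      (hsplit : IsSplit Cs g t g' ics)
      (hlen : cs.length = ics.length)
      (hrec : ∀ (i : ℕ) (ci : DTree V A L) (gi : PreGraph V A L) (ti : V),
          cs[i]? = some ci → ics[i]? = some (gi, ti) → IsDecompositionOf Cs ci gi ti) :
      IsDecompositionOf Cs (.node g' t cs) g t

/-- `LcsRel D ls` holds iff `ls` is the leaf construction-sequence of `D`. -/
inductive LcsRel : DTree V A L → List (PreGraph V A L × V) → Prop where
  | leaf (g : PreGraph V A L) (t : V) : LcsRel (.node g t []) [(g, t)]
  | node (g : PreGraph V A L) (t : V) (cs : List (DTree V A L))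
      (ls : List (List (PreGraph V A L × V)))
      (hne : cs ≠ []) (hlen : ls.length = cs.length)
      (h : ∀ (i : ℕ) (ci : DTree V A L) (li : List (PreGraph V A L × V)),
          cs[i]? = some ci → ls[i]? = some li → LcsRel ci li) :
      LcsRel (.node g t cs) ls.flatten

/-- `(p, w)` is one of the constructions labelling a vertex of the decomposition tree. -/
inductive LabelOf : DTree V A L → PreGraph V A L → V → Prop where
  | root (g : PreGraph V A L) (t : V) (cs : List (DTree V A L)) :
      LabelOf (.node g t cs) g t
  | child (g : PreGraph V A L) (t : V) (cs : List (DTree V A L))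
      (c : DTree V A L) (p : PreGraph V A L) (w : V) :
      c ∈ cs → LabelOf c p w → LabelOf (.node g t cs) p w

/-- The union of all the graphs labelling vertices of the decomposition tree
(the graph of the construction `ct(D)` of the decomposition `D`). -/
def DTree.ctGraph (D : DTree V A L) : PreGraph V A L :=
  ⟨{x | ∃ p w, LabelOf D p w ∧ x ∈ p.Tk},
   {x | ∃ p w, LabelOf D p w ∧ x ∈ p.Cf},
   {a | ∃ p w, LabelOf D p w ∧ a ∈ p.Arr},
   {q | ∃ p w, LabelOf D p w ∧ q ∈ p.inc},
   {q | ∃ p w, LabelOf D p w ∧ q ∈ p.ia},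
   {q | ∃ p w, LabelOf D p w ∧ q ∈ p.tl},
   {q | ∃ p w, LabelOf D p w ∧ q ∈ p.cl}⟩

/-- Every vertex label of the decomposition tree satisfies `P`. -/
inductive AllLabels (P : PreGraph V A L → V → Prop) : DTree V A L → Prop where
  | node (g : PreGraph V A L) (t : V) (cs : List (DTree V A L)) :
      P g t → (∀ c, c ∈ cs → AllLabels P c) → AllLabels P (.node g t cs)

/-- The subtree of a decomposition tree at a given position (a path of child indices). -/
def subtreeAt : List ℕ → DTree V A L → Option (DTree V A L)
  | [], D => some D
  | i :: rest, .node _ _ cs =>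
    match cs[i]? with
    | some c => subtreeAt rest c
    | none => none

/-! ## Patterns and embeddings -/

/-- An embedding of the graph `g` into the graph `p`: an isomorphism preserving arrow indices
and configurator labels, with token labels respecting the subtype relation `le`. -/
def IsEmbedding (le : Set (L × L)) (g p : PreGraph V A L) (fv : V → V) (fa : A → A) : Prop :=
  (∀ x ∈ g.Tk, fv x ∈ p.Tk) ∧ (∀ x ∈ g.Cf, fv x ∈ p.Cf) ∧
  (∀ x ∈ g.Tk ∪ g.Cf, ∀ y ∈ g.Tk ∪ g.Cf, fv x = fv y → x = y) ∧
  (∀ y ∈ p.Tk, ∃ x ∈ g.Tk, fv x = y) ∧ (∀ y ∈ p.Cf, ∃ x ∈ g.Cf, fv x = y) ∧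
  (∀ a ∈ g.Arr, fa a ∈ p.Arr) ∧
  (∀ a ∈ g.Arr, ∀ b ∈ g.Arr, fa a = fa b → a = b) ∧
  (∀ b ∈ p.Arr, ∃ a ∈ g.Arr, fa a = b) ∧
  (∀ a v w, (a, (v, w)) ∈ g.inc → (fa a, (fv v, fv w)) ∈ p.inc) ∧
  (∀ a n, (a, n) ∈ g.ia → (fa a, n) ∈ p.ia) ∧
  (∀ u c, (u, c) ∈ g.cl → (fv u, c) ∈ p.cl) ∧
  (∀ x τ, (x, τ) ∈ g.tl → ∃ σ, (fv x, σ) ∈ p.tl ∧ (τ, σ) ∈ le)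

/-- The construction `(g, t)` matches the pattern `(p, v)`. -/
def MatchesPattern (le : Set (L × L)) (g : PreGraph V A L) (t : V)
    (p : PreGraph V A L) (v : V) : Prop :=
  ∃ fv fa, IsEmbedding le g p fv fa ∧ fv t = v

/-- `Ps` is a pattern space for `Cs`: a construction space over the same type system and
constructor specification such that every construction of `Cs` matches some construction
of `Ps`. -/
def IsPatternSpace (Cs Ps : CSpace V A L) : Prop :=
  Ps.Ty = Cs.Ty ∧ Ps.le = Cs.le ∧ Ps.C = Cs.C ∧ Ps.sig = Cs.sig ∧ IsCSpace Ps ∧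
  ∀ g t, IsConstruction Cs g t →
    ∃ p v, IsConstruction Ps p v ∧ MatchesPattern Cs.le g t p v

/-- Vertex-wise matching of two same-shape decomposition trees under a common pair of maps. -/
inductive DMatches (le : Set (L × L)) (fv : V → V) (fa : A → A) :
    DTree V A L → DTree V A L → Prop where
  | node (g : PreGraph V A L) (t : V) (p : PreGraph V A L) (v : V)
      (cs ds : List (DTree V A L))
      (hemb : IsEmbedding le g p fv fa) (ht : fv t = v)
      (hlen : cs.length = ds.length)
      (hrec : ∀ (i : ℕ) (ci di : DTree V A L), cs[i]? = some ci → ds[i]? = some di →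
          DMatches le fv fa ci di) :
      DMatches le fv fa (.node g t cs) (.node p v ds)

/-- The decomposition `D` matches the (pattern) decomposition `Δ`: there is an arrow-index
preserving isomorphism of trees together with an embedding of `ct(D)` into `ct(Δ)` whose
restriction to each vertex label is an embedding into the corresponding pattern label. -/
def DecompositionMatches (le : Set (L × L)) (D Δ : DTree V A L) : Prop :=
  ∃ fv fa, IsEmbedding le D.ctGraph Δ.ctGraph fv fa ∧ fv D.rootTok = Δ.rootTok ∧
    DMatches le fv fa D Δ

/-! ## Descriptions -/

/-- A description: a set of decompositions of patterns (constructions in the pattern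
space `Ps`). -/
def IsDescriptionOf (Ps : CSpace V A L) (Ds : Set (DTree V A L)) : Prop :=
  ∀ Δ ∈ Ds, ∃ p v, IsConstruction Ps p v ∧ IsDecompositionOf Ps Δ p v

/-- The description `Ds` is complete for `Cs`. -/
def CompleteDescription (Cs : CSpace V A L) (Ds : Set (DTree V A L)) : Prop :=
  ∀ g t, IsConstruction Cs g t →
    ∃ Δ ∈ Ds, ∃ D, IsDecompositionOf Cs D g t ∧ DecompositionMatches Cs.le D Δ

/-- The set of patterns labelling vertices of decompositions in `Ds`. -/
def PatternsOf (Ds : Set (DTree V A L)) : Set (PreGraph V A L × V) :=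
  {pv | ∃ Δ ∈ Ds, LabelOf Δ pv.1 pv.2}

/-- Label-preserving isomorphism of patterns/constructions. -/
def LabelIsomorphic (g : PreGraph V A L) (t : V) (p : PreGraph V A L) (v : V) : Prop :=
  ∃ fv fa, IsEmbedding {q : L × L | q.1 = q.2} g p fv fa ∧ fv t = v

/-- The description `Ds` is compact: finitely many patterns up to label-preserving
isomorphism. -/
def CompactDescription (Ds : Set (DTree V A L)) : Prop :=
  ∃ Reps : Set (PreGraph V A L × V), Reps.Finite ∧
    ∀ pv ∈ PatternsOf Ds, ∃ qw ∈ Reps, LabelIsomorphic pv.1 pv.2 qw.1 qw.2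

/-! ## Transformation constraints and structural transformations -/

/-- A transformation-constraint-shaped triple: two patterns (or constructions) together with
a set of patterns (or constructions). -/
structure TConstraint (V A L : Type*) where
  pa : PreGraph V A L
  ca : V
  pb : PreGraph V A L
  cb : V
  Pc : Set (PreGraph V A L × V)

/-- The union of the graphs of a set of patterns. -/
def pGraph (P : Set (PreGraph V A L × V)) : PreGraph V A L :=
  ⟨{x | ∃ pv ∈ P, x ∈ pv.1.Tk}, {x | ∃ pv ∈ P, x ∈ pv.1.Cf},
   {a | ∃ pv ∈ P, a ∈ pv.1.Arr}, {q | ∃ pv ∈ P, q ∈ pv.1.inc},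
   {q | ∃ pv ∈ P, q ∈ pv.1.ia}, {q | ∃ pv ∈ P, q ∈ pv.1.tl},
   {q | ∃ pv ∈ P, q ∈ pv.1.cl}⟩

/-- A respectful embedding of the set of patterns `P` into the set of patterns `P'`. -/
def RespectfulEmbedding (le : Set (L × L)) (P P' : Set (PreGraph V A L × V))
    (fv : V → V) (fa : A → A) : Prop :=
  IsEmbedding le (pGraph P) (pGraph P') fv fa ∧
  ∀ pv ∈ P, ∃ qw ∈ P', IsEmbedding le pv.1 qw.1 fv fa ∧ fv pv.2 = qw.2

/-- Satisfaction of one transformation-constraint-shaped triple by another: embeddings of the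
first two components, a respectful embedding of the third, whose common underlying maps give
an isomorphism of the unions of the graphs. -/
def TCSatisfies (le : Set (L × L)) (s s' : TConstraint V A L) : Prop :=
  ∃ fv fa,
    IsEmbedding le s.pa s'.pa fv fa ∧ fv s.ca = s'.ca ∧
    IsEmbedding le s.pb s'.pb fv fa ∧ fv s.cb = s'.cb ∧
    RespectfulEmbedding le s.Pc s'.Pc fv fa ∧
    IsEmbedding le ((s.pa ∪ s.pb) ∪ pGraph s.Pc) ((s'.pa ∪ s'.pb) ∪ pGraph s'.Pc) fv fa

/-- A transformation constraint for an encoding described by `(Ds, Ds', P'')`. -/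
def IsTransformationConstraint (Ds Ds' : Set (DTree V A L))
    (P'' : Set (PreGraph V A L × V)) (s : TConstraint V A L) : Prop :=
  (s.pa, s.ca) ∈ PatternsOf Ds ∧ (s.pb, s.cb) ∈ PatternsOf Ds' ∧ s.Pc ⊆ P''

/-- A constraint assignment for `Δ` and `Δ'`: a partial function (modelled with `Option`) on
pairs of vertices (paths) whose values are transformation constraints from `S0` matched by the
corresponding labels. -/
def IsConstraintAssignment (leR leR' : Set (L × L)) (S0 : Set (TConstraint V A L))
    (Δ Δ' : DTree V A L) (Lm : List ℕ → List ℕ → Option (TConstraint V A L)) : Prop :=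
  ∀ pi pi' s, Lm pi pi' = some s → s ∈ S0 ∧
    (∃ δ, subtreeAt pi Δ = some δ ∧
        MatchesPattern leR δ.rootGraph δ.rootTok s.pa s.ca) ∧
    (∃ δ', subtreeAt pi' Δ' = some δ' ∧
        MatchesPattern leR' δ'.rootGraph δ'.rootTok s.pb s.cb)

/-- The constraint assignment `Lm` is satisfied by the pair of decompositions `(D, D')`
(whose vertices correspond, via the shape-preserving matchings, to those of `Δ`, `Δ'`). -/
def LSatisfiedBy (leI : Set (L × L)) (Ip : CSpace V A L)
    (Lm : List ℕ → List ℕ → Option (TConstraint V A L)) (D D' : DTree V A L) : Prop :=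
  ∀ pi pi' s d d', Lm pi pi' = some s →
    subtreeAt pi D = some d → subtreeAt pi' D' = some d' →
    ∃ Cset : Set (PreGraph V A L × V),
      (∀ pv ∈ Cset, IsConstruction Ip pv.1 pv.2) ∧
      TCSatisfies leI ⟨d.rootGraph, d.rootTok, d'.rootGraph, d'.rootTok, Cset⟩ s

/-- `(g', t')` is a structural `L`-transformation of `(g, t)` (with respect to the pattern
decompositions `Δ`, `Δ'` for the universal spaces `Ru`, `Ru'` and the inter-property
identification space `Ip`). -/
def IsStructuralLTransformation (Ru Ru' Ip : CSpace V A L) (Δ Δ' : DTree V A L)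
    (Lm : List ℕ → List ℕ → Option (TConstraint V A L))
    (g : PreGraph V A L) (t : V) (g' : PreGraph V A L) (t' : V) : Prop :=
  (∃ D, IsDecompositionOf Ru D g t ∧ DecompositionMatches Ru.le D Δ) ∧
  (∃ D', IsDecompositionOf Ru' D' g' t' ∧ DecompositionMatches Ru'.le D' Δ') ∧
  ∀ D D', IsDecompositionOf Ru D g t → DecompositionMatches Ru.le D Δ →
    IsDecompositionOf Ru' D' g' t' → DecompositionMatches Ru'.le D' Δ' →
    LSatisfiedBy Ip.le Ip Lm D D'

/-- Partial satisfaction: the constraint is only checked at vertices of the pattern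
decomposition `Δh` whose label is already a construction in `Ru'`. -/
def LPartialSatisfiedBy (leI : Set (L × L)) (Ip Ru' : CSpace V A L)
    (Lm : List ℕ → List ℕ → Option (TConstraint V A L)) (D Δh : DTree V A L) : Prop :=
  ∀ pi pi' s d δh, Lm pi pi' = some s →
    subtreeAt pi D = some d → subtreeAt pi' Δh = some δh →
    IsConstructionIn Ru' δh.rootGraph δh.rootTok →
    ∃ Cset : Set (PreGraph V A L × V),
      (∀ pv ∈ Cset, IsConstruction Ip pv.1 pv.2) ∧
      TCSatisfies leI ⟨d.rootGraph, d.rootTok, δh.rootGraph, δh.rootTok, Cset⟩ s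

/-- The pattern `(ph, vh)` (a construction in the pattern space `Ps'` for `Ru'`) is a partial
`L`-transformation of the construction `(g, t)`. -/
def IsPartialLTransformation (Ru Ru' Ip Ps' : CSpace V A L) (Δ Δ' : DTree V A L)
    (Lm : List ℕ → List ℕ → Option (TConstraint V A L))
    (g : PreGraph V A L) (t : V) (ph : PreGraph V A L) (vh : V) : Prop :=
  (∃ D, IsDecompositionOf Ru D g t ∧ DecompositionMatches Ru.le D Δ) ∧
  (∃ Δh, IsDecompositionOf Ps' Δh ph vh ∧ DecompositionMatches Ru'.le Δh Δ') ∧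
  ∀ D Δh, IsDecompositionOf Ru D g t → DecompositionMatches Ru.le D Δ →
    IsDecompositionOf Ps' Δh ph vh → DecompositionMatches Ru'.le Δh Δ' →
    LPartialSatisfiedBy Ip.le Ip Ru' Lm D Δh

/-! ## Validity, soundness, leaf instantiation -/

/-- Validity of `Lm` for `(g, t)` and `(p, v)` at the pair of vertices `(pi, pi')`. -/
def ValidAt (Ru Ru' Ip Ps' : CSpace V A L) (Δ Δ' : DTree V A L)
    (Lm : List ℕ → List ℕ → Option (TConstraint V A L))
    (g : PreGraph V A L) (t : V) (p : PreGraph V A L) (v : V)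
    (pi pi' : List ℕ) : Prop :=
  ∀ D Δh Dsub Δhsub Δsub Δsub',
    IsDecompositionOf Ru D g t → DecompositionMatches Ru.le D Δ →
    IsDecompositionOf Ps' Δh p v → DecompositionMatches Ru'.le Δh Δ' →
    subtreeAt pi D = some Dsub → subtreeAt pi' Δh = some Δhsub →
    subtreeAt pi Δ = some Δsub → subtreeAt pi' Δ' = some Δsub' →
    IsConstructionIn Ru' Δhsub.ctGraph Δhsub.rootTok →
    IsStructuralLTransformation Ru Ru' Ip Δsub Δsub'
      (fun σ σ' => Lm (pi ++ σ) (pi' ++ σ'))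
      Dsub.ctGraph Dsub.rootTok Δhsub.ctGraph Δhsub.rootTok

/-- Ancestor-validity: validity at every pair of proper descendants-in-the-tree
("ancestors" in the paper's in-tree terminology). -/
def AncestorValidAt (Ru Ru' Ip Ps' : CSpace V A L) (Δ Δ' : DTree V A L)
    (Lm : List ℕ → List ℕ → Option (TConstraint V A L))
    (g : PreGraph V A L) (t : V) (p : PreGraph V A L) (v : V)
    (pi pi' : List ℕ) : Prop :=
  ∀ σ σ' : List ℕ, σ ≠ [] → σ' ≠ [] →
    (∃ d, subtreeAt (pi ++ σ) Δ = some d) → (∃ d', subtreeAt (pi' ++ σ') Δ' = some d') →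
    ValidAt Ru Ru' Ip Ps' Δ Δ' Lm g t p v (pi ++ σ) (pi' ++ σ')

/-- Soundness of a constraint assignment. -/
def SoundAssignment (Ru Ru' Ip Ps' : CSpace V A L) (Δ Δ' : DTree V A L)
    (Lm : List ℕ → List ℕ → Option (TConstraint V A L)) : Prop :=
  ∀ g t, IsConstructionIn Ru g t →
    (∃ D, IsDecompositionOf Ru D g t ∧ DecompositionMatches Ru.le D Δ) →
    ∀ p v, IsConstruction Ps' p v →
      (∃ Δh, IsDecompositionOf Ps' Δh p v ∧ DecompositionMatches Ru'.le Δh Δ') →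
      ∀ pi pi', (∃ d, subtreeAt pi Δ = some d) → (∃ d', subtreeAt pi' Δ' = some d') →
        AncestorValidAt Ru Ru' Ip Ps' Δ Δ' Lm g t p v pi pi' →
        ValidAt Ru Ru' Ip Ps' Δ Δ' Lm g t p v pi pi'

/-- The pattern `(p, v)` leaf-instantiates `Δ'`: it matches `Δ'` and every leaf of its
`Δ'`-canonical decomposition is labelled by a construction in `Ru'`. -/
def LeafInstantiates (Ru' Ps' : CSpace V A L) (Δ' : DTree V A L)
    (p : PreGraph V A L) (v : V) : Prop :=
  (∃ Δh, IsDecompositionOf Ps' Δh p v ∧ DecompositionMatches Ru'.le Δh Δ') ∧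
  ∀ Δh, IsDecompositionOf Ps' Δh p v → DecompositionMatches Ru'.le Δh Δ' →
    ∀ pi δh, subtreeAt pi Δh = some δh → δh.kids = [] →
      IsConstructionIn Ru' δh.rootGraph δh.rootTok

/-- A complete extension of a pattern `(p, v)` that leaf-instantiates `Δ'`. -/
def CompleteExtension (Ru' Ps' : CSpace V A L) (Δ' : DTree V A L)
    (p : PreGraph V A L) (v : V) (g' : PreGraph V A L) (t' : V) : Prop :=
  IsConstructionIn Ru' g' t' ∧
  ∃ fv fa, IsEmbedding Ru'.le g' p fv fa ∧ fv t' = v ∧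
    ∀ Δh, IsDecompositionOf Ps' Δh p v → DecompositionMatches Ru'.le Δh Δ' →
      ∀ pi δh, subtreeAt pi Δh = some δh → δh.kids = [] →
        ∀ x ∈ δh.rootGraph.Tk, x ∈ g'.Tk ∧ fv x = x

/-- `(g, t)` and `(p, v)` are valid at the leaves of `Δ` and `Δ'`. -/
def ValidAtLeaves (Ru Ru' Ip Ps' : CSpace V A L) (Δ Δ' : DTree V A L)
    (Lm : List ℕ → List ℕ → Option (TConstraint V A L))
    (g : PreGraph V A L) (t : V) (p : PreGraph V A L) (v : V) : Prop :=
  ∀ pi pi' δ δ', subtreeAt pi Δ = some δ → subtreeAt pi' Δ' = some δ' →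
    δ.kids = [] → δ'.kids = [] →
    ValidAt Ru Ru' Ip Ps' Δ Δ' Lm g t p v pi pi'



/-! ### Auxiliary lemmas for Statement 12 -/

section UniquenessAux

variable {V A L : Type*}

private lemma exists_getElem?_zero {α : Type*} {l : List α} (h : l ≠ []) :
    ∃ b, l[0]? = some b := by
  cases l with
  | nil => exact absurd rfl h
  | cons x xs => exact ⟨x, by simp⟩

private lemma zip_getElem_mem {α β γ : Type*} (f : α → β → γ) :
    ∀ (l1 : List α) (l2 : List β) (i : ℕ) (a : α) (b : β),
      l1[i]? = some a → l2[i]? = some b → f a b ∈ List.zipWith f l1 l2 := by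
  intro l1
  induction l1 with
  | nil => intro l2 i a b h1 _; simp at h1
  | cons x xs ih =>
    intro l2 i a b h1 h2
    cases l2 with
    | nil => simp at h2
    | cons y ys =>
      cases i with
      | zero =>
        simp only [List.getElem?_cons_zero, Option.some.injEq] at h1 h2
        subst h1; subst h2
        exact List.mem_cons_self
      | succ n =>
        simp only [List.getElem?_cons_succ] at h1 h2
        exact List.mem_cons_of_mem _ (ih ys n a b h1 h2)

private lemma mem_zip_elim {α β γ : Type*} (f : α → β → γ) :
    ∀ (l1 : List α) (l2 : List β) (c : γ), c ∈ List.zipWith f l1 l2 →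
      ∃ (i : ℕ) (a : α) (b : β), l1[i]? = some a ∧ l2[i]? = some b ∧ c = f a b := by
  intro l1
  induction l1 with
  | nil => intro l2 c h; simp at h
  | cons x xs ih =>
    intro l2 c h
    cases l2 with
    | nil => simp at h
    | cons y ys =>
      rw [List.zipWith_cons_cons] at h
      rcases List.mem_cons.mp h with h | h
      · exact ⟨0, x, y, by simp, by simp, h⟩
      · obtain ⟨i, a, b, h1, h2, h3⟩ := ih ys c h
        exact ⟨i + 1, a, b, by simpa using h1, by simpa using h2, h3⟩

private lemma chainIn_append {g : PreGraph V A L} :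
    ∀ {l1 l2 : List A} {s v : V},
      ChainIn g (l1 ++ l2) s v ↔ ∃ m, ChainIn g l1 s m ∧ ChainIn g l2 m v := by
  intro l1
  induction l1 with
  | nil =>
    intro l2 s v
    constructor
    · intro h; exact ⟨s, rfl, h⟩
    · rintro ⟨m, hm, h⟩
      have hm' : s = m := hm
      rw [hm']; exact h
  | cons a l ih =>
    intro l2 s v
    constructor
    · rintro ⟨ha, m, hinc, hch⟩
      obtain ⟨m2, h1, h2⟩ := ih.mp hch
      exact ⟨m2, ⟨ha, m, hinc, h1⟩, h2⟩
    · rintro ⟨m2, ⟨ha, m, hinc, h1⟩, h2⟩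
      exact ⟨ha, m, hinc, ih.mpr ⟨m2, h1, h2⟩⟩

private lemma chainIn_arrows {g : PreGraph V A L} :
    ∀ {l : List A} {s v : V}, ChainIn g l s v → ∀ a ∈ l, a ∈ g.Arr := by
  intro l
  induction l with
  | nil => intro s v _ a ha; simp at ha
  | cons b l ih =>
    rintro s v ⟨hb, m, _, hch⟩ a ha
    rcases List.mem_cons.mp ha with rfl | ha
    · exact hb
    · exact ih hch a ha

private lemma chainIn_concat {g : PreGraph V A L} {l : List A} {s v : V}
    (hne : l ≠ []) (h : ChainIn g l s v) :
    ∃ l0 a m, l = l0 ++ [a] ∧ ChainIn g l0 s m ∧ a ∈ g.Arr ∧ (a, (m, v)) ∈ g.inc := by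
  rcases List.eq_nil_or_concat l with rfl | ⟨l0, a, rfl⟩
  · exact absurd rfl hne
  · rw [List.concat_eq_append] at h
    obtain ⟨m, h0, h1⟩ := chainIn_append.mp h
    obtain ⟨haA, m2, hinc, hm2⟩ := h1
    have hm2' : m2 = v := hm2
    subst hm2'
    exact ⟨l0, a, m, List.concat_eq_append .., h0, haA, hinc⟩

private lemma chainIn_mono {g1 g : PreGraph V A L} (hsub : g1.Subgraph g) :
    ∀ {l : List A} {s v : V}, ChainIn g1 l s v → ChainIn g l s v := by
  intro l
  induction l with
  | nil => intro s v h; exact h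
  | cons a l ih =>
    rintro s v ⟨ha, m, hinc, hch⟩
    exact ⟨hsub.2.2.1 ha, m, hsub.2.2.2.1 hinc, ih hch⟩

private lemma inc_unique {g : PreGraph V A L} (hg : IsGraph g) {a : A} {p q : V × V}
    (h1 : (a, p) ∈ g.inc) (h2 : (a, q) ∈ g.inc) : p = q := by
  have ha : a ∈ g.Arr := hg.2.1.1 _ h1
  obtain ⟨y, _, hy⟩ := hg.2.1.2 a ha
  exact (hy p h1).trans (hy q h2).symm

private lemma ia_unique {g : PreGraph V A L} (hg : IsGraph g) {a : A} {n m : ℕ}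
    (h1 : (a, n) ∈ g.ia) (h2 : (a, m) ∈ g.ia) : n = m := by
  have ha : a ∈ g.Arr := hg.2.2.2.1.1 _ h1
  obtain ⟨y, _, hy⟩ := hg.2.2.2.1.2 a ha
  exact (hy n h1).trans (hy m h2).symm

private lemma tl_unique {g : PreGraph V A L} (hg : IsGraph g) {x : V} {σ τ : L}
    (h1 : (x, σ) ∈ g.tl) (h2 : (x, τ) ∈ g.tl) : σ = τ := by
  have hx : x ∈ g.Tk := hg.2.2.2.2.1.1 _ h1
  obtain ⟨y, _, hy⟩ := hg.2.2.2.2.1.2 x hx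
  exact (hy σ h1).trans (hy τ h2).symm

private lemma cl_unique {g : PreGraph V A L} (hg : IsGraph g) {x : V} {σ τ : L}
    (h1 : (x, σ) ∈ g.cl) (h2 : (x, τ) ∈ g.cl) : σ = τ := by
  have hx : x ∈ g.Cf := hg.2.2.2.2.2.1 _ h1
  obtain ⟨y, _, hy⟩ := hg.2.2.2.2.2.2 x hx
  exact (hy σ h1).trans (hy τ h2).symm

private lemma sub_inc {g1 g : PreGraph V A L} (hg1 : IsGraph g1) (hg : IsGraph g)
    (hsub : g1.Subgraph g) {a : A} {p : V × V} (ha : a ∈ g1.Arr) (hp : (a, p) ∈ g.inc) :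
    (a, p) ∈ g1.inc := by
  obtain ⟨q, hq, _⟩ := hg1.2.1.2 a ha
  have : q = p := inc_unique hg (hsub.2.2.2.1 hq) hp
  exact this ▸ hq

private lemma sub_ia {g1 g : PreGraph V A L} (hg1 : IsGraph g1) (hg : IsGraph g)
    (hsub : g1.Subgraph g) {a : A} {n : ℕ} (ha : a ∈ g1.Arr) (hp : (a, n) ∈ g.ia) :
    (a, n) ∈ g1.ia := by
  obtain ⟨q, hq, _⟩ := hg1.2.2.2.1.2 a ha
  have : q = n := ia_unique hg (hsub.2.2.2.2.1 hq) hp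
  exact this ▸ hq

private lemma sub_tl {g1 g : PreGraph V A L} (hg1 : IsGraph g1) (hg : IsGraph g)
    (hsub : g1.Subgraph g) {x : V} {τ : L} (hx : x ∈ g1.Tk) (hp : (x, τ) ∈ g.tl) :
    (x, τ) ∈ g1.tl := by
  obtain ⟨q, hq, _⟩ := hg1.2.2.2.2.1.2 x hx
  have : q = τ := tl_unique hg (hsub.2.2.2.2.2.1 hq) hp
  exact this ▸ hq

private lemma sub_cl {g1 g : PreGraph V A L} (hg1 : IsGraph g1) (hg : IsGraph g)
    (hsub : g1.Subgraph g) {x : V} {τ : L} (hx : x ∈ g1.Cf) (hp : (x, τ) ∈ g.cl) :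
    (x, τ) ∈ g1.cl := by
  obtain ⟨q, hq, _⟩ := hg1.2.2.2.2.2.2 x hx
  have : q = τ := cl_unique hg (hsub.2.2.2.2.2.2 hq) hp
  exact this ▸ hq

private lemma src_cf_of_inc_tk {g : PreGraph V A L} (hg : IsGraph g) {a : A} {u x : V}
    (h : (a, (u, x)) ∈ g.inc) (hx : x ∈ g.Tk) : u ∈ g.Cf := by
  rcases hg.2.2.1 a u x h with ⟨_, hx'⟩ | ⟨hu, _⟩
  · exact absurd hx' (Set.disjoint_left.mp hg.1 hx)
  · exact hu

private lemma src_tk_of_inc_cf {g : PreGraph V A L} (hg : IsGraph g) {a : A} {u x : V}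
    (h : (a, (x, u)) ∈ g.inc) (hu : u ∈ g.Cf) : x ∈ g.Tk := by
  rcases hg.2.2.1 a x u h with ⟨hx, _⟩ | ⟨_, hu'⟩
  · exact hx
  · exact absurd hu (Set.disjoint_left.mp hg.1 hu')

private lemma inArrowSeq_unique {g : PreGraph V A L} (hg : IsGraph g) {u : V} {l l' : List A}
    (h : InArrowSeq g u l) (h' : InArrowSeq g u l') : l = l' := by
  have key : ∀ (l1 l2 : List A), InArrowSeq g u l1 → InArrowSeq g u l2 →
      ∀ (i : ℕ) (a : A), l1[i]? = some a → l2[i]? = some a := by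
    intro l1 l2 h1 h2 i a hi
    have ha : a ∈ l1 := List.mem_of_getElem? hi
    have ha2 : a ∈ l2 := (h2.2.1 a).mpr ((h1.2.1 a).mp ha)
    obtain ⟨j, hj⟩ := List.mem_iff_getElem?.mp ha2
    have e1 : (a, i + 1) ∈ g.ia := h1.2.2 i a hi
    have e2 : (a, j + 1) ∈ g.ia := h2.2.2 j a hj
    have hij : i = j := by have := ia_unique hg e1 e2; omega
    rwa [hij]
  apply List.ext_getElem?
  intro i
  cases hl : l[i]? with
  | some a => rw [key l l' h h' i a hl]
  | none =>
    cases hl' : l'[i]? with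
    | some a => rw [key l' l h' h i a hl'] at hl; exact hl.symm ▸ rfl
    | none => rfl

private lemma nh_in_iff (g : PreGraph V A L) (u : V) (a : A) :
    (a ∈ (g.Nh u).Arr ∧ ∃ w, (a, (w, u)) ∈ (g.Nh u).inc) ↔
      (a ∈ g.Arr ∧ ∃ w, (a, (w, u)) ∈ g.inc) := by
  constructor
  · rintro ⟨ha, w, hw⟩; exact ⟨ha.1, w, hw.1⟩
  · rintro ⟨ha, w, hw⟩
    have hi : a ∈ g.incidentArrows u := ⟨ha, w, Or.inl hw⟩
    exact ⟨⟨ha, hi⟩, w, ⟨hw, hi⟩⟩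

private lemma nh_out_iff (g : PreGraph V A L) (u : V) (a : A) (w : V) :
    (a ∈ (g.Nh u).Arr ∧ (a, (u, w)) ∈ (g.Nh u).inc) ↔
      (a ∈ g.Arr ∧ (a, (u, w)) ∈ g.inc) := by
  constructor
  · rintro ⟨ha, hw⟩; exact ⟨ha.1, hw.1⟩
  · rintro ⟨ha, hw⟩
    have hi : a ∈ g.incidentArrows u := ⟨ha, w, Or.inr hw⟩
    exact ⟨⟨ha, hi⟩, ⟨hw, hi⟩⟩

private lemma inArrowSeq_nh_mem {g : PreGraph V A L} {u : V} {ars : List A}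
    (h : InArrowSeq (g.Nh u) u ars) (a : A) :
    a ∈ ars ↔ (a ∈ g.Arr ∧ ∃ w, (a, (w, u)) ∈ g.inc) :=
  (h.2.1 a).trans (nh_in_iff g u a)

private lemma cf_exists_inarrow {Ty : Set L} {le : Set (L × L)} {C : Set L}
    {sig : Set (L × (List L × L))} {g : PreGraph V A L}
    (hsig : ∀ c ins out, (c, (ins, out)) ∈ sig → ins ≠ [])
    (hsg : IsStructureGraph Ty le C sig g) {u : V} (hu : u ∈ g.Cf) :
    ∃ a w, a ∈ g.Arr ∧ (a, (w, u)) ∈ g.inc := by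
  obtain ⟨c, ins, out, _, _, hmem, hconf⟩ := hsg.2.2 u hu
  obtain ⟨ars, hars, hlen, -⟩ := hconf.2.2.2.2.2.2
  have hne : ars ≠ [] := by
    intro h
    subst h
    exact hsig c ins out hmem (List.length_eq_zero_iff.mp hlen.symm)
  obtain ⟨a, ha⟩ := List.exists_mem_of_ne_nil ars hne
  obtain ⟨hA, w, hw⟩ := (inArrowSeq_nh_mem hars a).mp ha
  exact ⟨a, w, hA, hw⟩

private lemma cf_out_unique {Ty : Set L} {le : Set (L × L)} {C : Set L}
    {sig : Set (L × (List L × L))} {g : PreGraph V A L}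
    (hsg : IsStructureGraph Ty le C sig g) {u : V} (hu : u ∈ g.Cf)
    {a b : A} {w w' : V} (ha : a ∈ g.Arr) (hainc : (a, (u, w)) ∈ g.inc)
    (hb : b ∈ g.Arr) (hbinc : (b, (u, w')) ∈ g.inc) : a = b := by
  obtain ⟨c, ins, out, _, _, _, hconf⟩ := hsg.2.2 u hu
  obtain ⟨a0, _, huniq⟩ := hconf.2.2.2.2.1
  have h1 := (nh_out_iff g u a w).mpr ⟨ha, hainc⟩
  have h2 := (nh_out_iff g u b w').mpr ⟨hb, hbinc⟩
  exact (huniq a ⟨h1.1, w, h1.2⟩).trans (huniq b ⟨h2.1, w', h2.2⟩).symm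

private lemma cf_in_closed {Ty : Set L} {le : Set (L × L)} {C : Set L}
    {sig : Set (L × (List L × L))} {g1 g : PreGraph V A L}
    (hsigfun : IsFunctionOn sig C)
    (hsg1 : IsStructureGraph Ty le C sig g1) (hsg : IsStructureGraph Ty le C sig g)
    (hsub : g1.Subgraph g) {u : V} (hu : u ∈ g1.Cf) {a : A} {w : V}
    (haA : a ∈ g.Arr) (hainc : (a, (w, u)) ∈ g.inc) :
    a ∈ g1.Arr ∧ (a, (w, u)) ∈ g1.inc := by
  have hg := hsg.1
  obtain ⟨c1, ins1, out1, hcl1, hc1C, hsig1, hconf1⟩ := hsg1.2.2 u hu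
  obtain ⟨c, ins, out, hcl, hcC, hsigm, hconf⟩ := hsg.2.2 u (hsub.2.1 hu)
  have hceq : c1 = c := cl_unique hg (hsub.2.2.2.2.2.2 hcl1) hcl
  subst hceq
  have hinseq : ins1 = ins := by
    obtain ⟨y, _, hy⟩ := hsigfun.2 c1 hc1C
    have := (hy _ hsig1).trans (hy _ hsigm).symm
    exact (Prod.ext_iff.mp this).1
  obtain ⟨ars1, hars1, hlen1, -⟩ := hconf1.2.2.2.2.2.2
  obtain ⟨ars, hars, hlen, -⟩ := hconf.2.2.2.2.2.2
  have hsubset : ars1 ⊆ ars := by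
    intro x hx
    obtain ⟨hxA, w', hw'⟩ := (inArrowSeq_nh_mem hars1 x).mp hx
    exact (inArrowSeq_nh_mem hars x).mpr ⟨hsub.2.2.1 hxA, w', hsub.2.2.2.1 hw'⟩
  have hperm : ars1.Perm ars :=
    (List.Nodup.subperm hars1.1 hsubset).perm_of_length_le
      ((by rw [hlen, hlen1, hinseq] : ars.length = ars1.length).le)
  have hmem : a ∈ ars1 := hperm.mem_iff.mpr ((inArrowSeq_nh_mem hars a).mpr ⟨haA, w, hainc⟩)
  obtain ⟨hA1, w2, hw2⟩ := (inArrowSeq_nh_mem hars1 a).mp hmem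
  have hw2' : w2 = w := (Prod.ext_iff.mp (inc_unique hg (hsub.2.2.2.1 hw2) hainc)).1
  subst hw2'
  exact ⟨hA1, hw2⟩

private lemma tes_nonempty {Ty : Set L} {le : Set (L × L)} {C : Set L}
    {sig : Set (L × (List L × L))} {g : PreGraph V A L}
    (hsig : ∀ c ins out, (c, (ins, out)) ∈ sig → ins ≠ [])
    (hsg : IsStructureGraph Ty le C sig g)
    {tr : Trail V A} {S : List (Trail V A)} (h : TES g tr S) :
    tr.src ∈ g.Tk → S ≠ [] := by
  have hg := hsg.1
  induction h with
  | nonext tr hne => intro _; simp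
  | ext tr a u ars Ss hext hinc hars hlen hrec ih =>
    intro hsrc
    have hu : u ∈ g.Cf := src_cf_of_inc_tk hg hinc hsrc
    obtain ⟨a0, w0, ha0, hw0⟩ := cf_exists_inarrow hsig hsg hu
    have ha0m : a0 ∈ ars := (hars.2.1 a0).mpr ⟨ha0, w0, hw0⟩
    have hne : ars ≠ [] := List.ne_nil_of_mem ha0m
    obtain ⟨a1, h1⟩ := exists_getElem?_zero hne
    have hlen0 : 0 < Ss.length := by
      rw [hlen]; exact List.length_pos_of_ne_nil hne
    obtain ⟨S0, h2⟩ : ∃ S0, Ss[0]? = some S0 := ⟨_, List.getElem?_eq_getElem hlen0⟩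
    have ha1m : a1 ∈ ars := List.mem_of_getElem? h1
    obtain ⟨hA1, s0, hs0⟩ := (hars.2.1 a1).mp ha1m
    have hs0tk : s0 ∈ g.Tk := src_tk_of_inc_cf hg hs0 hu
    have hS0ne : S0 ≠ [] := ih 0 a1 s0 S0 h1 h2 hs0 hs0tk
    obtain ⟨e, he⟩ := List.exists_mem_of_ne_nil S0 hS0ne
    exact List.ne_nil_of_mem (List.mem_flatten.mpr
      ⟨_, zip_getElem_mem _ ars Ss 0 a1 S0 h1 h2, List.mem_map.mpr ⟨e, he, rfl⟩⟩)

private lemma tes_src_tk {g : PreGraph V A L} (hg : IsGraph g)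
    {tr : Trail V A} {S : List (Trail V A)} (h : TES g tr S) :
    tr.src ∈ g.Tk → ∀ e ∈ S, e.src ∈ g.Tk := by
  induction h with
  | nonext tr hne =>
    intro hsrc e he
    rcases List.mem_singleton.mp he with rfl
    exact hsrc
  | ext tr a u ars Ss hext hinc hars hlen hrec ih =>
    intro hsrc e he
    obtain ⟨l, hl, hel⟩ := List.mem_flatten.mp he
    obtain ⟨i, ai, Si, h1, h2, rfl⟩ := mem_zip_elim _ ars Ss l hl
    obtain ⟨e', he', rfl⟩ := List.mem_map.mp hel
    have hu : u ∈ g.Cf := src_cf_of_inc_tk hg hinc hsrc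
    obtain ⟨hA, si, hsi⟩ := (hars.2.1 ai).mp (List.mem_of_getElem? h1)
    exact ih i ai si Si h1 h2 hsi (src_tk_of_inc_cf hg hsi hu) e' he'

private lemma tes_arrows {g : PreGraph V A L}
    {tr : Trail V A} {S : List (Trail V A)} (h : TES g tr S) :
    ∀ e ∈ S, ∀ b ∈ e.arrows, b ∈ g.Arr := by
  induction h with
  | nonext tr hne =>
    intro e he b hb
    rcases List.mem_singleton.mp he with rfl
    simp at hb
  | ext tr a u ars Ss hext hinc hars hlen hrec ih =>
    intro e he b hb
    obtain ⟨l, hl, hel⟩ := List.mem_flatten.mp he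
    obtain ⟨i, ai, Si, h1, h2, rfl⟩ := mem_zip_elim _ ars Ss l hl
    obtain ⟨e', he', rfl⟩ := List.mem_map.mp hel
    obtain ⟨hA, si, hsi⟩ := (hars.2.1 ai).mp (List.mem_of_getElem? h1)
    rcases List.mem_append.mp hb with h | h
    · exact ih i ai si Si h1 h2 hsi e' he' b h
    · rcases List.mem_cons.mp h with rfl | h
      · exact hA
      · rcases List.mem_cons.mp h with rfl | h
        · exact hext.1
        · simp at h

private lemma tes_nodup {Ty : Set L} {le : Set (L × L)} {C : Set L}
    {sig : Set (L × (List L × L))} {g : PreGraph V A L}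
    (hsg : IsStructureGraph Ty le C sig g)
    {tr : Trail V A} {S : List (Trail V A)} (h : TES g tr S) :
    tr.src ∈ g.Tk → tr.tgt ∈ g.Tk → tr.arrows.Nodup →
      ChainIn g tr.arrows tr.src tr.tgt →
    ∀ e ∈ S, (e.arrows ++ tr.arrows).Nodup := by
  have hg := hsg.1
  induction h with
  | nonext tr hne =>
    intro _ _ hnd _ e he
    rcases List.mem_singleton.mp he with rfl
    simpa using hnd
  | ext tr a u ars Ss hext hinc hars hlen hrec ih =>
    intro hsrc htgt hnd hch e he
    obtain ⟨l, hl, hel⟩ := List.mem_flatten.mp he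
    obtain ⟨i, ai, Si, h1, h2, rfl⟩ := mem_zip_elim _ ars Ss l hl
    obtain ⟨e', he', rfl⟩ := List.mem_map.mp hel
    have hu : u ∈ g.Cf := src_cf_of_inc_tk hg hinc hsrc
    obtain ⟨hAi, si, hsi⟩ := (hars.2.1 ai).mp (List.mem_of_getElem? h1)
    have hsitk : si ∈ g.Tk := src_tk_of_inc_cf hg hsi hu
    have hne1 : ai ≠ a := by
      rintro rfl
      have h0 := inc_unique hg hsi hinc
      have h1' : si = u := (Prod.ext_iff.mp h0).1
      exact Set.disjoint_left.mp hg.1 (h1' ▸ hsitk) hu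
    have hne2 : ai ∉ tr.arrows := by
      intro hmem
      obtain ⟨l1, l2, hsplit⟩ := List.append_of_mem hmem
      have hch' := hch
      rw [hsplit] at hch'
      obtain ⟨m, _, hc2⟩ := chainIn_append.mp hch'
      obtain ⟨_, m2, hm2, hc3⟩ := hc2
      have hm2u : m2 = u := (Prod.ext_iff.mp (inc_unique hg hm2 hsi)).2
      rw [hm2u] at hc3
      cases hl2 : l2 with
      | nil =>
        rw [hl2] at hc3
        have hut : u = tr.tgt := hc3
        have : u ∈ g.Tk := by rw [hut]; exact htgt
        exact Set.disjoint_left.mp hg.1 this hu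
      | cons a2 l3 =>
        rw [hl2] at hc3
        obtain ⟨hA2, m3, hm3, _⟩ := hc3
        have ha2a : a2 = a := cf_out_unique hsg hu hA2 hm3 hext.1 hinc
        have : a2 ∈ tr.arrows := by rw [hsplit, hl2]; simp
        exact hext.2.1 (ha2a ▸ this)
    have hndext : (ai :: a :: tr.arrows).Nodup := by
      refine List.nodup_cons.mpr ⟨?_, List.nodup_cons.mpr ⟨hext.2.1, hnd⟩⟩
      intro hmem
      rcases List.mem_cons.mp hmem with h | h
      · exact hne1 h
      · exact hne2 h
    have hchext : ChainIn g (ai :: a :: tr.arrows) si tr.tgt :=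
      ⟨hAi, u, hsi, hext.1, tr.src, hinc, hch⟩
    have hres := ih i ai si Si h1 h2 hsi hsitk htgt hndext hchext e' he'
    show ((e'.arrows ++ [ai, a]) ++ tr.arrows).Nodup
    rw [List.append_assoc]
    exact hres

private lemma tes_det {g : PreGraph V A L} (hg : IsGraph g) (hus : UniStructured g)
    {tr : Trail V A} {S : List (Trail V A)} (h : TES g tr S) :
    ∀ S', TES g tr S' → tr.src ∈ g.Tk → S = S' := by
  induction h with
  | nonext tr hne =>
    intro S' h' _
    cases h' with
    | nonext => rfl
    | ext _ a _ _ _ hext _ _ _ _ => exact absurd ⟨a, hext⟩ hne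
  | ext tr a u ars Ss hext hinc hars hlen hrec ih =>
    intro S' h' hsrc
    cases h' with
    | nonext _ hne => exact absurd ⟨a, hext⟩ hne
    | ext _ a' u' ars' Ss' hext' hinc' hars' hlen' hrec' =>
      obtain ⟨s1, hs1⟩ := hext.2.2
      obtain ⟨s1', hs1'⟩ := hext'.2.2
      have haa : a = a' := hus tr.src hsrc a hext.1 a' hext'.1 ⟨s1, hs1⟩ ⟨s1', hs1'⟩
      subst haa
      have huu : u = u' := (Prod.ext_iff.mp (inc_unique hg hinc hinc')).1
      subst huu
      have hars_eq : ars = ars' := inArrowSeq_unique hg hars hars'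
      subst hars_eq
      have hu : u ∈ g.Cf := src_cf_of_inc_tk hg hinc hsrc
      have hSs : Ss = Ss' := by
        apply List.ext_getElem?
        intro i
        by_cases hi : i < ars.length
        · obtain ⟨ai, h1⟩ : ∃ ai, ars[i]? = some ai := ⟨_, List.getElem?_eq_getElem hi⟩
          obtain ⟨hAi, si, hsi⟩ := (hars.2.1 ai).mp (List.mem_of_getElem? h1)
          have hilt : i < Ss.length := by rw [hlen]; exact hi
          have hilt' : i < Ss'.length := by rw [hlen']; exact hi
          have h2 : Ss[i]? = some (Ss[i]'hilt) := List.getElem?_eq_getElem hilt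
          have h2' : Ss'[i]? = some (Ss'[i]'hilt') := List.getElem?_eq_getElem hilt'
          have hsitk : si ∈ g.Tk := src_tk_of_inc_cf hg hsi hu
          rw [h2, h2']
          exact congrArg some
            (ih i ai si _ h1 h2 hsi _ (hrec' i ai si _ h1 h2' hsi) hsitk)
        · rw [List.getElem?_eq_none (by rw [hlen]; omega),
            List.getElem?_eq_none (by rw [hlen']; omega)]
      rw [hSs]

private lemma tes_capture {Ty : Set L} {le : Set (L × L)} {C : Set L}
    {sig : Set (L × (List L × L))} {g : PreGraph V A L}
    (hg : IsGraph g) (hus : UniStructured g)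
    (hsig : ∀ c ins out, (c, (ins, out)) ∈ sig → ins ≠ [])
    (hsg : IsStructureGraph Ty le C sig g)
    {tr : Trail V A} {S : List (Trail V A)} (h : TES g tr S) :
    ∀ (q : List A) (s : V), ChainIn g q s tr.src → q ≠ [] → (q ++ tr.arrows).Nodup →
      tr.src ∈ g.Tk → ∀ b ∈ q, b ∈ trailArrowSet S := by
  induction h with
  | nonext tr hne =>
    intro q s hch hqne hnd hsrc b hb
    rcases List.eq_nil_or_concat q with rfl | ⟨q0, alast, rfl⟩
    · exact absurd rfl hqne
    · rw [List.concat_eq_append] at hch hnd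
      obtain ⟨m, hc0, hc1⟩ := chainIn_append.mp hch
      obtain ⟨hA, m2, hincl, hm2⟩ := hc1
      have hm2' : m2 = tr.src := hm2
      rw [hm2'] at hincl
      have hnotin : alast ∉ tr.arrows := fun hmem =>
        (List.nodup_append'.mp hnd).2.2 (show alast ∈ q0 ++ [alast] by simp) hmem
      exact absurd ⟨alast, hA, hnotin, m, hincl⟩ hne
  | ext tr a u ars Ss hext hinc hars hlen hrec ih =>
    intro q s hch hqne hnd hsrc b hb
    have hu : u ∈ g.Cf := src_cf_of_inc_tk hg hinc hsrc
    rcases List.eq_nil_or_concat q with rfl | ⟨q0, alast, rfl⟩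
    · exact absurd rfl hqne
    · rw [List.concat_eq_append] at hch hnd hb
      obtain ⟨m, hc0, hc1⟩ := chainIn_append.mp hch
      obtain ⟨hA, m2, hincl, hm2⟩ := hc1
      have hm2' : m2 = tr.src := hm2
      rw [hm2'] at hincl
      have halast : alast = a := hus tr.src hsrc alast hA a hext.1 ⟨m, hincl⟩ hext.2.2
      subst halast
      have hmu : m = u := (Prod.ext_iff.mp (inc_unique hg hincl hinc)).1
      subst hmu
      have hmemS : ∀ (j : ℕ) (c : A) (Sj : List (Trail V A)),
          ars[j]? = some c → Ss[j]? = some Sj →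
          ∀ e ∈ Sj, (⟨e.arrows ++ [c, alast], e.src, tr.src⟩ : Trail V A) ∈
            List.flatten (List.zipWith (fun ai Si => Si.map fun e =>
              (⟨e.arrows ++ [ai, alast], e.src, tr.src⟩ : Trail V A)) ars Ss) := by
        intro j c Sj h1 h2 e he
        exact List.mem_flatten.mpr
          ⟨_, zip_getElem_mem _ ars Ss j c Sj h1 h2, List.mem_map.mpr ⟨e, he, rfl⟩⟩
      rcases List.eq_nil_or_concat q0 with rfl | ⟨q1, c, hq0⟩
      · have hb' : b = alast := by simpa using hb
        rw [hb']
        obtain ⟨a0, w0, ha0, hw0⟩ := cf_exists_inarrow hsig hsg hu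
        have ha0m : a0 ∈ ars := (hars.2.1 a0).mpr ⟨ha0, w0, hw0⟩
        have hne' : ars ≠ [] := List.ne_nil_of_mem ha0m
        obtain ⟨a1, h1⟩ := exists_getElem?_zero hne'
        have hlen0 : 0 < Ss.length := by
          rw [hlen]; exact List.length_pos_of_ne_nil hne'
        obtain ⟨S0, h2⟩ : ∃ S0, Ss[0]? = some S0 := ⟨_, List.getElem?_eq_getElem hlen0⟩
        obtain ⟨hA1, s0, hs0⟩ := (hars.2.1 a1).mp (List.mem_of_getElem? h1)
        have hs0tk : s0 ∈ g.Tk := src_tk_of_inc_cf hg hs0 hu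
        have hS0ne : S0 ≠ [] := tes_nonempty hsig hsg (hrec 0 a1 s0 S0 h1 h2 hs0) hs0tk
        obtain ⟨e, he⟩ := List.exists_mem_of_ne_nil S0 hS0ne
        exact ⟨_, hmemS 0 a1 S0 h1 h2 e he, List.mem_append.mpr (Or.inr (by simp))⟩
      · rw [List.concat_eq_append] at hq0
        subst hq0
        obtain ⟨m', hc1', hc2'⟩ := chainIn_append.mp hc0
        obtain ⟨hcA, m3, hcinc, hm3⟩ := hc2'
        have hm3' : m3 = m := hm3
        rw [hm3'] at hcinc
        have hcm : c ∈ ars := (hars.2.1 c).mpr ⟨hcA, m', hcinc⟩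
        obtain ⟨j, hj⟩ := List.mem_iff_getElem?.mp hcm
        have hjlt : j < Ss.length := by
          rw [hlen]; exact (List.getElem?_eq_some_iff.mp hj).1
        obtain ⟨Sj, h2⟩ : ∃ Sj, Ss[j]? = some Sj := ⟨_, List.getElem?_eq_getElem hjlt⟩
        have hTj := hrec j c m' Sj hj h2 hcinc
        have hm'tk : m' ∈ g.Tk := src_tk_of_inc_cf hg hcinc hu
        have hSjne : Sj ≠ [] := tes_nonempty hsig hsg hTj hm'tk
        rcases List.mem_append.mp hb with hb0 | hba
        · rcases List.mem_append.mp hb0 with hb1 | hbc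
          · have hq1ne : q1 ≠ [] := List.ne_nil_of_mem hb1
            have hnd' : (q1 ++ (c :: alast :: tr.arrows)).Nodup := by
              simpa using hnd
            obtain ⟨e, he, hbe⟩ :=
              ih j c m' Sj hj h2 hcinc q1 s hc1' hq1ne hnd' hm'tk b hb1
            exact ⟨_, hmemS j c Sj hj h2 e he, List.mem_append.mpr (Or.inl hbe)⟩
          · have hb' : b = c := by simpa using hbc
            obtain ⟨e, he⟩ := List.exists_mem_of_ne_nil Sj hSjne
            exact ⟨_, hmemS j c Sj hj h2 e he, List.mem_append.mpr (Or.inr (by simp [hb']))⟩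
        · have hb' : b = alast := by simpa using hba
          obtain ⟨e, he⟩ := List.exists_mem_of_ne_nil Sj hSjne
          exact ⟨_, hmemS j c Sj hj h2 e he, List.mem_append.mpr (Or.inr (by simp [hb']))⟩

private lemma tes_capture_src {g : PreGraph V A L} (hg : IsGraph g) (hus : UniStructured g)
    {tr : Trail V A} {S : List (Trail V A)} (h : TES g tr S) :
    ∀ (q : List A) (s : V), ChainIn g q s tr.src → (q ++ tr.arrows).Nodup →
      tr.src ∈ g.Tk → s ∈ g.Tk → (∀ a ∈ g.Arr, ∀ v, (a, (v, s)) ∉ g.inc) →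
      ∃ e ∈ S, e.src = s := by
  induction h with
  | nonext tr hne =>
    intro q s hch hnd hsrc hstk hleaf
    rcases List.eq_nil_or_concat q with rfl | ⟨q0, alast, rfl⟩
    · have hs : s = tr.src := hch
      exact ⟨⟨[], tr.src, tr.src⟩, List.mem_singleton_self _, hs.symm⟩
    · rw [List.concat_eq_append] at hch hnd
      obtain ⟨m, hc0, hc1⟩ := chainIn_append.mp hch
      obtain ⟨hA, m2, hincl, hm2⟩ := hc1
      have hm2' : m2 = tr.src := hm2
      rw [hm2'] at hincl
      have hnotin : alast ∉ tr.arrows := fun hmem =>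
        (List.nodup_append'.mp hnd).2.2 (show alast ∈ q0 ++ [alast] by simp) hmem
      exact absurd ⟨alast, hA, hnotin, m, hincl⟩ hne
  | ext tr a u ars Ss hext hinc hars hlen hrec ih =>
    intro q s hch hnd hsrc hstk hleaf
    have hu : u ∈ g.Cf := src_cf_of_inc_tk hg hinc hsrc
    rcases List.eq_nil_or_concat q with rfl | ⟨q0, alast, rfl⟩
    · have hs : s = tr.src := hch
      subst hs
      obtain ⟨s', hs'⟩ := hext.2.2
      exact absurd hs' (hleaf a hext.1 s')
    · rw [List.concat_eq_append] at hch hnd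
      obtain ⟨m, hc0, hc1⟩ := chainIn_append.mp hch
      obtain ⟨hA, m2, hincl, hm2⟩ := hc1
      have hm2' : m2 = tr.src := hm2
      rw [hm2'] at hincl
      have halast : alast = a := hus tr.src hsrc alast hA a hext.1 ⟨m, hincl⟩ hext.2.2
      subst halast
      have hmu : m = u := (Prod.ext_iff.mp (inc_unique hg hincl hinc)).1
      subst hmu
      have hmemS : ∀ (j : ℕ) (c : A) (Sj : List (Trail V A)),
          ars[j]? = some c → Ss[j]? = some Sj →
          ∀ e ∈ Sj, (⟨e.arrows ++ [c, alast], e.src, tr.src⟩ : Trail V A) ∈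
            List.flatten (List.zipWith (fun ai Si => Si.map fun e =>
              (⟨e.arrows ++ [ai, alast], e.src, tr.src⟩ : Trail V A)) ars Ss) := by
        intro j c Sj h1 h2 e he
        exact List.mem_flatten.mpr
          ⟨_, zip_getElem_mem _ ars Ss j c Sj h1 h2, List.mem_map.mpr ⟨e, he, rfl⟩⟩
      rcases List.eq_nil_or_concat q0 with rfl | ⟨q1, c, hq0⟩
      · have hsu : s = m := hc0
        have : m ∈ g.Tk := hsu ▸ hstk
        exact absurd hu (Set.disjoint_left.mp hg.1 this)
      · rw [List.concat_eq_append] at hq0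
        subst hq0
        obtain ⟨m', hc1', hc2'⟩ := chainIn_append.mp hc0
        obtain ⟨hcA, m3, hcinc, hm3⟩ := hc2'
        have hm3' : m3 = m := hm3
        rw [hm3'] at hcinc
        have hcm : c ∈ ars := (hars.2.1 c).mpr ⟨hcA, m', hcinc⟩
        obtain ⟨j, hj⟩ := List.mem_iff_getElem?.mp hcm
        have hjlt : j < Ss.length := by
          rw [hlen]; exact (List.getElem?_eq_some_iff.mp hj).1
        obtain ⟨Sj, h2⟩ : ∃ Sj, Ss[j]? = some Sj := ⟨_, List.getElem?_eq_getElem hjlt⟩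
        have hm'tk : m' ∈ g.Tk := src_tk_of_inc_cf hg hcinc hu
        have hnd' : (q1 ++ (c :: alast :: tr.arrows)).Nodup := by
          simpa using hnd
        obtain ⟨e, he, hesrc⟩ :=
          ih j c m' Sj hj h2 hcinc q1 s hc1' hnd' hm'tk hstk hleaf
        exact ⟨_, hmemS j c Sj hj h2 e he, hesrc⟩

private lemma dropWhile_head_false {α : Type*} (p : α → Bool) :
    ∀ (l : List α) (a : α) (as : List α), l.dropWhile p = a :: as → p a = false := by
  intro l
  induction l with
  | nil => intro a as h; simp [List.dropWhile] at h
  | cons x xs ih =>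
    intro a as h
    by_cases hx : p x = true
    · rw [List.dropWhile_cons_of_pos hx] at h
      exact ih a as h
    · rw [List.dropWhile_cons_of_neg (by simpa using hx)] at h
      injection h with h1 h2
      rw [← h1]
      simpa using hx

private lemma pregraph_eq {g g' : PreGraph V A L}
    (h1 : g.Subgraph g') (h2 : g'.Subgraph g) : g = g' := by
  obtain ⟨a1, b1, c1, d1, e1, f1, i1⟩ := h1
  obtain ⟨a2, b2, c2, d2, e2, f2, i2⟩ := h2
  cases g; cases g'
  simp only [PreGraph.mk.injEq]
  exact ⟨Set.Subset.antisymm a1 a2, Set.Subset.antisymm b1 b2, Set.Subset.antisymm c1 c2,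
    Set.Subset.antisymm d1 d2, Set.Subset.antisymm e1 e2, Set.Subset.antisymm f1 f2,
    Set.Subset.antisymm i1 i2⟩

private lemma split_covers {Cs : CSpace V A L} (hCs : IsCSpace Cs)
    {g g' g1 : PreGraph V A L} {t : V}
    (hg : IsConstruction Cs g t) (hg' : IsConstruction Cs g' t)
    (hgen : IsConstruction Cs g1 t) (hsub : g1.Subgraph g) (hsub' : g1.Subgraph g')
    {trs : List (Trail V A)} (htrs : TES g1 (Trail.nil t) trs)
    (hS : ∀ (i : ℕ) (tri : Trail V A), trs[i]? = some tri →
        ∃ Si Si', TES g tri Si ∧ TES g' tri Si' ∧ trGraph g Si = trGraph g' Si') :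
    g.Subgraph g' := by
  classical
  have hsgg : IsStructureGraph Cs.Ty Cs.le Cs.C Cs.sig g := hg.2.1
  have hsg1 : IsStructureGraph Cs.Ty Cs.le Cs.C Cs.sig g1 := hgen.2.1
  have hgg : IsGraph g := hsgg.1
  have hgg1 : IsGraph g1 := hsg1.1
  have hgg' : IsGraph g' := hg'.2.1.1
  have hus : UniStructured g := hg.2.2.2.2.2.1
  have hus1 : UniStructured g1 := hgen.2.2.2.2.2.1
  have hsig : ∀ c ins out, (c, (ins, out)) ∈ Cs.sig → ins ≠ [] :=
    fun c ins out h => (hCs.2.2.2.1 c ins out h).1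
  have hsigfun : IsFunctionOn Cs.sig Cs.C := hCs.2.2.1
  have ht1 : t ∈ g1.Tk := hgen.2.2.2.2.2.2.1
  have key_arr : ∀ b ∈ g.Arr, b ∉ g1.Arr →
      ∃ Si Si', trGraph g Si = trGraph g' Si' ∧ b ∈ trailArrowSet Si := by
    intro b hbArr hb1
    obtain ⟨p, hp, -⟩ := hgg.2.1.2 b hbArr
    obtain ⟨s, m⟩ := p
    have hm : m ∈ g.Tk ∪ g.Cf := by
      rcases hgg.2.2.1 b s m hp with ⟨_, h⟩ | ⟨_, h⟩
      · exact Or.inr h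
      · exact Or.inl h
    obtain ⟨w, htrw, hsrcw, htgtw⟩ := hg.2.2.2.2.2.2.2 m hm
    obtain ⟨q', hchain, hnodup⟩ : ∃ q', ChainIn g (b :: q') s t ∧ (b :: q').Nodup := by
      by_cases hbw : b ∈ w.arrows
      · obtain ⟨u2, u3, hsplit⟩ := List.append_of_mem hbw
        have hch : ChainIn g w.arrows w.src w.tgt := htrw.2.1
        rw [hsplit, hsrcw, htgtw] at hch
        obtain ⟨mid, h1, h2⟩ := chainIn_append.mp hch
        obtain ⟨hbA, m2, hm2, h3⟩ := h2
        have hmid1 : mid = s := (Prod.ext_iff.mp (inc_unique hgg hm2 hp)).1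
        refine ⟨u3, ⟨hbA, m2, ?_, h3⟩, ?_⟩
        · rw [hmid1] at hm2; exact hm2
        · have hnd := htrw.1
          rw [hsplit] at hnd
          exact (List.nodup_append.mp hnd).2.1
      · refine ⟨w.arrows, ⟨hbArr, m, hp, ?_⟩, List.nodup_cons.mpr ⟨hbw, htrw.1⟩⟩
        have hch := htrw.2.1
        rw [hsrcw, htgtw] at hch
        exact hch
    set q : List A := b :: q' with hqdef
    set pb : A → Bool := fun x => decide (x ∉ g1.Arr) with hpb
    have hq_eq : q.takeWhile pb ++ q.dropWhile pb = q := List.takeWhile_append_dropWhile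
    have hq1prop : ∀ x ∈ q.takeWhile pb, x ∉ g1.Arr := by
      intro x hx
      have := List.mem_takeWhile_imp hx
      simpa [hpb] using this
    have hpbb : pb b = true := by simp [hpb, hb1]
    have hq1ne : q.takeWhile pb ≠ [] := by
      rw [hqdef, List.takeWhile_cons_of_pos hpbb]
      simp
    have hbq1 : b ∈ q.takeWhile pb := by
      rw [hqdef, List.takeWhile_cons_of_pos hpbb]
      exact List.mem_cons_self
    have hq1nd : (q.takeWhile pb).Nodup := hnodup.sublist (List.takeWhile_prefix pb).sublist
    have hchq : ChainIn g (q.takeWhile pb ++ q.dropWhile pb) s t := by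
      rw [hq_eq]; exact hchain
    obtain ⟨y, hcy, hcright⟩ := chainIn_append.mp hchq
    obtain ⟨q10, alast, mlast, hq1eq, hc10, halA, halinc⟩ := chainIn_concat hq1ne hcy
    have halast_not : alast ∉ g1.Arr := hq1prop alast (by rw [hq1eq]; simp)
    have hyg1 : y ∈ g1.Tk := by
      cases hdrop : q.dropWhile pb with
      | nil =>
        rw [hdrop] at hcright
        have hyt : y = t := hcright
        rw [hyt]; exact ht1
      | cons a2 q3 =>
        rw [hdrop] at hcright
        obtain ⟨hA2, m2, hm2, _⟩ := hcright
        have hpa2 : pb a2 = false := dropWhile_head_false pb q a2 q3 hdrop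
        have ha2g1 : a2 ∈ g1.Arr := by
          by_contra hcon
          simp [hpb, hcon] at hpa2
        have hm2g1 : (a2, (y, m2)) ∈ g1.inc := sub_inc hgg1 hgg hsub ha2g1 hm2
        rcases hgg1.2.2.1 a2 y m2 hm2g1 with ⟨hyTk, _⟩ | ⟨hyCf, _⟩
        · exact hyTk
        · exact absurd (cf_in_closed hsigfun hsg1 hsgg hsub hyCf halA halinc).1 halast_not
    have hyleaf : ∀ a ∈ g1.Arr, ∀ v, (a, (v, y)) ∉ g1.inc := by
      intro a ha v hv
      have haG : a ∈ g.Arr := hsub.2.2.1 ha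
      have hvG : (a, (v, y)) ∈ g.inc := hsub.2.2.2.1 hv
      have heq : a = alast := hus y (hsub.1 hyg1) a haG alast halA ⟨v, hvG⟩ ⟨mlast, halinc⟩
      exact halast_not (heq ▸ ha)
    obtain ⟨wy, htry, hsy, hty⟩ := hgen.2.2.2.2.2.2.2 y (Or.inl hyg1)
    have hchainy : ChainIn g1 wy.arrows y t := by
      have hch := htry.2.1
      rw [hsy, hty] at hch
      exact hch
    have hndy : (wy.arrows ++ ([] : List A)).Nodup := by simpa using htry.1
    obtain ⟨e, hetrs, hesrc⟩ :=
      tes_capture_src hgg1 hus1 htrs wy.arrows y hchainy hndy ht1 hyg1 hyleaf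
    obtain ⟨i, hi⟩ := List.mem_iff_getElem?.mp hetrs
    obtain ⟨Si, Si', hTi, hTi', hGeq⟩ := hS i e hi
    have hend : e.arrows.Nodup := by
      have hnd := tes_nodup hsg1 htrs ht1 ht1 List.nodup_nil rfl e hetrs
      simpa [Trail.nil] using hnd
    have hesub : ∀ x ∈ e.arrows, x ∈ g1.Arr := tes_arrows htrs e hetrs
    have hndqe : (q.takeWhile pb ++ e.arrows).Nodup := by
      refine List.nodup_append'.mpr ⟨hq1nd, hend, ?_⟩
      intro x hx1 hx2
      exact hq1prop x hx1 (hesub x hx2)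
    have hsrcTk : e.src ∈ g.Tk := by
      have : e.src ∈ g1.Tk := by rw [hesrc]; exact hyg1
      exact hsub.1 this
    have hchainq1 : ChainIn g (q.takeWhile pb) s e.src := by rw [hesrc]; exact hcy
    have hbmem := tes_capture hgg hus hsig hsgg hTi (q.takeWhile pb) s
      hchainq1 hq1ne hndqe hsrcTk b hbq1
    exact ⟨Si, Si', hGeq, hbmem⟩
  have hvert : ∀ x, x ∈ g.Tk ∪ g.Cf → x ≠ t →
      ∃ a m', a ∈ g.Arr ∧ (a, (x, m')) ∈ g.inc := by
    intro x hx hxt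
    obtain ⟨w, htrw, hsrcw, htgtw⟩ := hg.2.2.2.2.2.2.2 x hx
    have hch : ChainIn g w.arrows x t := by
      have := htrw.2.1
      rw [hsrcw, htgtw] at this
      exact this
    cases harr : w.arrows with
    | nil =>
      rw [harr] at hch
      exact absurd hch hxt
    | cons a rest =>
      rw [harr] at hch
      obtain ⟨hA, m', hm', _⟩ := hch
      exact ⟨a, m', hA, hm'⟩
  have key_tok : ∀ x ∈ g.Tk, x ∈ g1.Tk ∨
      ∃ Si Si', trGraph g Si = trGraph g' Si' ∧ x ∈ trailVertexSet g Si := by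
    intro x hx
    by_cases hxt : x = t
    · rw [hxt]; exact Or.inl ht1
    · obtain ⟨a, m', hA, hm'⟩ := hvert x (Or.inl hx) hxt
      by_cases hag1 : a ∈ g1.Arr
      · have hin1 : (a, (x, m')) ∈ g1.inc := sub_inc hgg1 hgg hsub hag1 hm'
        rcases hgg1.2.2.1 a x m' hin1 with ⟨hxTk, _⟩ | ⟨hxCf, _⟩
        · exact Or.inl hxTk
        · exact absurd hx (Set.disjoint_right.mp hgg.1 (hsub.2.1 hxCf))
      · obtain ⟨Si, Si', hGeq, hbmem⟩ := key_arr a hA hag1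
        exact Or.inr ⟨Si, Si', hGeq, Or.inl ⟨a, hbmem, m', Or.inl hm'⟩⟩
  have key_cf : ∀ x ∈ g.Cf, x ∈ g1.Cf ∨
      ∃ Si Si', trGraph g Si = trGraph g' Si' ∧ x ∈ trailVertexSet g Si := by
    intro x hx
    have hxt : x ≠ t := by
      intro h
      exact Set.disjoint_right.mp hgg.1 hx (h ▸ hg.2.2.2.2.2.2.1)
    obtain ⟨a, m', hA, hm'⟩ := hvert x (Or.inr hx) hxt
    by_cases hag1 : a ∈ g1.Arr
    · have hin1 : (a, (x, m')) ∈ g1.inc := sub_inc hgg1 hgg hsub hag1 hm'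
      rcases hgg1.2.2.1 a x m' hin1 with ⟨hxTk, _⟩ | ⟨hxCf, _⟩
      · exact absurd hx (Set.disjoint_left.mp hgg.1 (hsub.1 hxTk))
      · exact Or.inl hxCf
    · obtain ⟨Si, Si', hGeq, hbmem⟩ := key_arr a hA hag1
      exact Or.inr ⟨Si, Si', hGeq, Or.inl ⟨a, hbmem, m', Or.inl hm'⟩⟩
  refine ⟨?_, ?_, ?_, ?_, ?_, ?_, ?_⟩
  · intro x hx
    rcases key_tok x hx with h | ⟨Si, Si', hGeq, hvset⟩
    · exact hsub'.1 h
    · have hmem : x ∈ (trGraph g Si).Tk := ⟨hx, hvset⟩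
      rw [hGeq] at hmem
      exact hmem.1
  · intro x hx
    rcases key_cf x hx with h | ⟨Si, Si', hGeq, hvset⟩
    · exact hsub'.2.1 h
    · have hmem : x ∈ (trGraph g Si).Cf := ⟨hx, hvset⟩
      rw [hGeq] at hmem
      exact hmem.1
  · intro b hb
    by_cases hbg1 : b ∈ g1.Arr
    · exact hsub'.2.2.1 hbg1
    · obtain ⟨Si, Si', hGeq, hbmem⟩ := key_arr b hb hbg1
      have hmem : b ∈ (trGraph g Si).Arr := ⟨hb, hbmem⟩
      rw [hGeq] at hmem
      exact hmem.1
  · rintro ⟨a, v, w⟩ hp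
    have haA : a ∈ g.Arr := hgg.2.1.1 _ hp
    by_cases hag1 : a ∈ g1.Arr
    · exact hsub'.2.2.2.1 (sub_inc hgg1 hgg hsub hag1 hp)
    · obtain ⟨Si, Si', hGeq, hbmem⟩ := key_arr a haA hag1
      have hmem : (a, (v, w)) ∈ (trGraph g Si).inc := ⟨hp, hbmem⟩
      rw [hGeq] at hmem
      exact hmem.1
  · rintro ⟨a, n⟩ hp
    have haA : a ∈ g.Arr := hgg.2.2.2.1.1 _ hp
    by_cases hag1 : a ∈ g1.Arr
    · exact hsub'.2.2.2.2.1 (sub_ia hgg1 hgg hsub hag1 hp)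
    · obtain ⟨Si, Si', hGeq, hbmem⟩ := key_arr a haA hag1
      have hmem : (a, n) ∈ (trGraph g Si).ia := ⟨hp, hbmem⟩
      rw [hGeq] at hmem
      exact hmem.1
  · rintro ⟨x, τ⟩ hp
    have hx : x ∈ g.Tk := hgg.2.2.2.2.1.1 _ hp
    rcases key_tok x hx with h | ⟨Si, Si', hGeq, hvset⟩
    · exact hsub'.2.2.2.2.2.1 (sub_tl hgg1 hgg hsub h hp)
    · have hmem : (x, τ) ∈ (trGraph g Si).tl := ⟨hp, hvset⟩
      rw [hGeq] at hmem
      exact hmem.1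
  · rintro ⟨x, τ⟩ hp
    have hx : x ∈ g.Cf := hgg.2.2.2.2.2.1 _ hp
    rcases key_cf x hx with h | ⟨Si, Si', hGeq, hvset⟩
    · exact hsub'.2.2.2.2.2.2 (sub_cl hgg1 hgg hsub h hp)
    · have hmem : (x, τ) ∈ (trGraph g Si).cl := ⟨hp, hvset⟩
      rw [hGeq] at hmem
      exact hmem.1

end UniquenessAux

/-- a decomposition is a decomposition of a unique construction. -/
theorem decomposition_determines_construction {V A L : Type*}
    (Cs : CSpace V A L) (hCs : IsCSpace Cs)
    (g g' : PreGraph V A L) (t t' : V)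
    (hg : IsConstruction Cs g t) (hg' : IsConstruction Cs g' t')
    (D : DTree V A L)
    (hD : IsDecompositionOf Cs D g t) (hD' : IsDecompositionOf Cs D g' t') :
    g = g' ∧ t = t' := by
  have hsig : ∀ c ins out, (c, (ins, out)) ∈ Cs.sig → ins ≠ [] :=
    fun c ins out h => (hCs.2.2.2.1 c ins out h).1
  have key : ∀ (D0 : DTree V A L) (ga : PreGraph V A L) (ta : V),
      IsDecompositionOf Cs D0 ga ta → ∀ (gb : PreGraph V A L) (tb : V),
        IsDecompositionOf Cs D0 gb tb → ga = gb ∧ ta = tb := by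
    intro D0 ga ta h
    induction h with
    | single g0 t0 hcon =>
      intro gb tb h'
      cases h' with
      | single _ _ _ => exact ⟨rfl, rfl⟩
      | split gB tB gen2 ics2 cs2 hc2 hsplit2 hlen2 hrec2 =>
        exfalso
        obtain ⟨hgen2, _, trs2, htrs2, hlenx, _⟩ := hsplit2
        have hics : ics2 = [] := List.length_eq_zero_iff.mp hlen2.symm
        subst hics
        have htrsnil : trs2 = [] := List.length_eq_zero_iff.mp hlenx.symm
        exact tes_nonempty hsig hgen2.2.1 htrs2 hgen2.2.2.2.2.2.2.1 htrsnil
    | split g0 t0 gen ics cs hc hsplit hlen hrec ih =>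
      intro gb tb h'
      cases h' with
      | single _ _ _ =>
        exfalso
        obtain ⟨hgen, _, trs, htrs, hlenx, _⟩ := hsplit
        have hics : ics = [] := List.length_eq_zero_iff.mp hlen.symm
        subst hics
        have htrsnil : trs = [] := List.length_eq_zero_iff.mp hlenx.symm
        exact tes_nonempty hsig hgen.2.1 htrs hgen.2.2.2.2.2.2.1 htrsnil
      | split gB tB genB icsB csB hcB hsplitB hlenB hrecB =>
        obtain ⟨hgen, hsubg, trs, htrs, hlenics, hforall⟩ := hsplit
        obtain ⟨hgenB, hsubgB, trsB, htrsB, hlenicsB, hforallB⟩ := hsplitB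
        have hgg1 : IsGraph gen := hgen.2.1.1
        have hus1 : UniStructured gen := hgen.2.2.2.2.2.1
        have ht1 : t0 ∈ gen.Tk := hgen.2.2.2.2.2.2.1
        have htrseq : trs = trsB := tes_det hgg1 hus1 htrs trsB htrsB ht1
        subst htrseq
        have hS : ∀ (i : ℕ) (tri : Trail V A), trs[i]? = some tri →
            ∃ Si Si', TES g0 tri Si ∧ TES gb tri Si' ∧
              trGraph g0 Si = trGraph gb Si' := by
          intro i tri hi
          obtain ⟨Si, hTi, hicsi⟩ := hforall i tri hi
          obtain ⟨Si', hTi', hicsi'⟩ := hforallB i tri hi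
          have hilt : i < cs.length := by
            rw [hlen, hlenics]
            exact (List.getElem?_eq_some_iff.mp hi).1
          obtain ⟨ci, hci⟩ : ∃ ci, cs[i]? = some ci := ⟨_, List.getElem?_eq_getElem hilt⟩
          have d2 := hrecB i ci _ _ hci hicsi'
          have hind := ih i ci _ _ hci hicsi _ _ d2
          exact ⟨Si, Si', hTi, hTi', hind.1⟩
        refine ⟨pregraph_eq ?_ ?_, rfl⟩
        · exact split_covers hCs hc hcB hgen hsubg hsubgB htrs hS
        · refine split_covers hCs hcB hc hgen hsubgB hsubg htrs ?_
          intro i tri hi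
          obtain ⟨Si, Si', h1, h2, h3⟩ := hS i tri hi
          exact ⟨Si', Si, h2, h1, h3.symm⟩
  exact key D g t hD g' t' hD'

end RST
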